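/- arXiv:quant-ph/0412031 — 6 statements merged into one kernel-verified Lean document; each statement's English description precedes it below -/
import Mathlib

section
/- Let H be a finite-dimensional complex inner product space, E an orthogonal projection on H, and C a Hermitian operator on H with CE = C. An operator D° with 0 ≤ D° ≤ E attains the supremum of Tr(CD) over all operators D with 0 ≤ D ≤ E if and only if there exists a Hermitian operator B° with B° ≥ 0 and B° ≥ C such that B°(E − D°) = 0 and (B° − C)D° = 0. Moreover, any such B° attains the infimum of Tr(BE) over all Hermitian operators B with B ≥ 0 and B ≥ C, the same two conditions are also necessary and sufficient for optimality of B° in this dual problem (given some admissible D°), and the optimal values coincide: sup{Tr(CD) : 0 ≤ D ≤ E} = inf{Tr(BE) : B ≥ 0, B ≥ C}. -/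
open Matrix
open scoped ComplexOrder

private lemma trace_AhA {n : ℕ} (A : Matrix (Fin n) (Fin n) ℂ) :
    0 ≤ ((Aᴴ * A).trace).re ∧ (((Aᴴ * A).trace).re = 0 → A = 0) := by
  have h : ((Aᴴ * A).trace).re = ∑ i, ∑ j, Complex.normSq (A j i) := by
    simp [Matrix.trace, Matrix.mul_apply, Matrix.diag, Complex.normSq_eq_conj_mul_self,
      Matrix.conjTranspose_apply, Complex.normSq_apply]
  constructor
  · rw [h]
    exact Finset.sum_nonneg fun _ _ => Finset.sum_nonneg fun _ _ => Complex.normSq_nonneg _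
  · intro h0
    rw [h] at h0
    have : ∀ i ∈ Finset.univ, ∀ j ∈ Finset.univ, Complex.normSq (A (j:Fin n) (i:Fin n)) = 0 := by
      have := (Finset.sum_eq_zero_iff_of_nonneg (fun i _ => Finset.sum_nonneg
        (fun j _ => Complex.normSq_nonneg _))).mp h0
      intro i hi j hj
      exact (Finset.sum_eq_zero_iff_of_nonneg (fun j _ => Complex.normSq_nonneg _)).mp
        (this i hi) j hj
    ext j i
    simpa using Complex.normSq_eq_zero.mp (this i (Finset.mem_univ _) j (Finset.mem_univ _))

section PosSemidefSqrt
open scoped MatrixOrder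

noncomputable def Matrix.PosSemidef.sqrt {n : ℕ} {X : Matrix (Fin n) (Fin n) ℂ}
    (_hX : X.PosSemidef) : Matrix (Fin n) (Fin n) ℂ := CFC.sqrt X

lemma Matrix.PosSemidef.posSemidef_sqrt {n : ℕ} {X : Matrix (Fin n) (Fin n) ℂ}
    (hX : X.PosSemidef) : hX.sqrt.PosSemidef := (CFC.sqrt_nonneg X).posSemidef

lemma Matrix.PosSemidef.sqrt_mul_self {n : ℕ} {X : Matrix (Fin n) (Fin n) ℂ}
    (hX : X.PosSemidef) : hX.sqrt * hX.sqrt = X := CFC.sqrt_mul_sqrt_self X hX.nonneg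

end PosSemidefSqrt

private lemma trace_psd_mul {n : ℕ} {X Y : Matrix (Fin n) (Fin n) ℂ}
    (hX : X.PosSemidef) (hY : Y.PosSemidef) :
    0 ≤ ((X * Y).trace).re ∧ (((X * Y).trace).re = 0 → X * Y = 0) := by
  set A := hX.sqrt * hY.sqrt with hA
  have hXs := hX.posSemidef_sqrt.1
  have hYs := hY.posSemidef_sqrt.1
  have htr : (X * Y).trace = (Aᴴ * A).trace := by
    have h1 : Aᴴ * A = hY.sqrt * (X * hY.sqrt) := by
      rw [hA, Matrix.conjTranspose_mul, hXs.eq, hYs.eq, Matrix.mul_assoc,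
        ← Matrix.mul_assoc hX.sqrt, hX.sqrt_mul_self]
    rw [h1, Matrix.trace_mul_comm hY.sqrt (X * hY.sqrt), Matrix.mul_assoc, hY.sqrt_mul_self]
  obtain ⟨h1, h2⟩ := trace_AhA A
  rw [← htr] at h1 h2
  refine ⟨h1, fun h0 => ?_⟩
  have hA0 := h2 h0
  have hXY : X * Y = hX.sqrt * (A * hY.sqrt) := by
    rw [hA, Matrix.mul_assoc, hY.sqrt_mul_self, ← Matrix.mul_assoc, hX.sqrt_mul_self]
  rw [hXY, hA0, Matrix.zero_mul, Matrix.mul_zero]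

private lemma key_construction {n : ℕ} (E C : Matrix (Fin n) (Fin n) ℂ)
    (hE : E.IsHermitian) (hEproj : E * E = E)
    (hC : C.IsHermitian) (hCE : C * E = C) :
    ∃ P Cp : Matrix (Fin n) (Fin n) ℂ, P.PosSemidef ∧ (E - P).PosSemidef ∧
      Cp.PosSemidef ∧ (Cp - C).PosSemidef ∧
      Cp * (E - P) = 0 ∧ (Cp - C) * P = 0 ∧ C * P = Cp ∧ Cp * E = Cp := by
  set U : Matrix (Fin n) (Fin n) ℂ := (hC.eigenvectorUnitary : Matrix (Fin n) (Fin n) ℂ) with hUdef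
  set lam : Fin n → ℝ := hC.eigenvalues with hlamdef
  have hU2 : Uᴴ * U = 1 := by
    rw [← Matrix.star_eq_conjTranspose]
    exact mem_unitaryGroup_iff'.mp (hC.eigenvectorUnitary).2
  set mk : (Fin n → ℂ) → Matrix (Fin n) (Fin n) ℂ := fun g => U * diagonal g * Uᴴ with hmkdef
  have hspec : C = mk (fun i => (lam i : ℂ)) := by
    simpa [hmkdef, Matrix.star_eq_conjTranspose, Function.comp_def] using hC.spectral_theorem
  have hmul : ∀ g h : Fin n → ℂ, mk g * mk h = mk (fun i => g i * h i) := by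
    intro g h
    simp only [hmkdef, Matrix.mul_assoc]
    rw [← Matrix.mul_assoc Uᴴ U, hU2, Matrix.one_mul, ← Matrix.mul_assoc (diagonal g),
      diagonal_mul_diagonal]
  have hsub : ∀ g h : Fin n → ℂ, mk g - mk h = mk (fun i => g i - h i) := by
    intro g h
    simp only [hmkdef, ← diagonal_sub, Matrix.sub_mul, Matrix.mul_sub]
  have hpsd : ∀ g : Fin n → ℂ, (∀ i, 0 ≤ g i) → (mk g).PosSemidef := by
    intro g hg
    exact (Matrix.PosSemidef.diagonal hg).mul_mul_conjTranspose_same U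
  -- E fixes mk (lam * g)
  have hEC : E * C = C := by
    calc E * C = (C * E)ᴴ := by rw [Matrix.conjTranspose_mul, hE.eq, hC.eq]
    _ = C := by rw [hCE, hC.eq]
  have hEUD : E * (U * diagonal (fun i => (lam i : ℂ))) = U * diagonal (fun i => (lam i : ℂ)) := by
    have h1 : U * diagonal (fun i => (lam i : ℂ)) = C * U := by
      rw [hspec, hmkdef, Matrix.mul_assoc, Matrix.mul_assoc, hU2, Matrix.mul_one]
    rw [h1, ← Matrix.mul_assoc, hEC]
  have hfix : ∀ g : Fin n → ℂ, E * mk (fun i => (lam i : ℂ) * g i) = mk (fun i => (lam i : ℂ) * g i) := by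
    intro g
    have h1 : mk (fun i => (lam i : ℂ) * g i)
        = (U * diagonal (fun i => (lam i : ℂ))) * (diagonal g * Uᴴ) := by
      rw [hmkdef]
      simp only [← diagonal_mul_diagonal]
      rw [Matrix.mul_assoc, Matrix.mul_assoc, Matrix.mul_assoc]
    rw [h1, ← Matrix.mul_assoc, hEUD]
  -- the two functions
  set gind : Fin n → ℂ := fun i => if 0 < lam i then 1 else 0 with hgind
  set gpos : Fin n → ℂ := fun i => ((max (lam i) 0 : ℝ) : ℂ) with hgpos
  have hind_eq : gind = fun i => (lam i : ℂ) * (if 0 < lam i then ((lam i : ℂ))⁻¹ else 0) := by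
    funext i
    by_cases h : 0 < lam i
    · have : (lam i : ℂ) ≠ 0 := by exact_mod_cast ne_of_gt h
      simp [hgind, h, mul_inv_cancel₀ this]
    · simp [hgind, h]
  have hpos_eq : gpos = fun i => (lam i : ℂ) * gind i := by
    funext i
    by_cases h : 0 < lam i
    · simp [hgpos, hgind, h, max_eq_left h.le]
    · simp [hgpos, hgind, h, max_eq_right (not_lt.mp h)]
  set P := mk gind with hPdef
  set Cp := mk gpos with hCpdef
  have hPpsd : P.PosSemidef := hpsd _ fun i => by
    by_cases h : 0 < lam i <;> simp [hgind, h]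
  have hCppsd : Cp.PosSemidef := hpsd _ fun i => by
    simp only [hgpos]
    exact_mod_cast Complex.zero_le_real.mpr (le_max_right _ _)
  have hCpCpsd : (Cp - C).PosSemidef := by
    rw [hCpdef, hspec, hsub]
    refine hpsd _ fun i => ?_
    simp only [hgpos]
    rw [show ((max (lam i) 0 : ℝ) : ℂ) - ((lam i : ℝ) : ℂ) = ((max (lam i) 0 - lam i : ℝ) : ℂ) by
      push_cast; ring]
    exact Complex.zero_le_real.mpr (by simp [sub_nonneg, le_max_left])
  have hEP : E * P = P := by rw [hPdef, hind_eq]; exact hfix _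
  have hECp : E * Cp = Cp := by rw [hCpdef, hpos_eq]; exact hfix _
  have hPE : P * E = P := by
    calc P * E = (E * P)ᴴ := by rw [Matrix.conjTranspose_mul, hE.eq, hPpsd.1.eq]
    _ = P := by rw [hEP, hPpsd.1.eq]
  have hCpE : Cp * E = Cp := by
    calc Cp * E = (E * Cp)ᴴ := by rw [Matrix.conjTranspose_mul, hE.eq, hCppsd.1.eq]
    _ = Cp := by rw [hECp, hCppsd.1.eq]
  have hPP : P * P = P := by
    have h1 : (fun i => gind i * gind i) = gind := by
      funext i
      by_cases h : 0 < lam i <;> simp [hgind, h]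
    rw [hPdef, hmul, h1]
  have hEPpsd : (E - P).PosSemidef := by
    have hherm : (E - P).IsHermitian := hE.sub hPpsd.1
    have hidem : (E - P) * (E - P) = E - P := by
      rw [Matrix.sub_mul, Matrix.mul_sub, Matrix.mul_sub, hEproj, hEP, hPE, hPP]
      abel
    have := Matrix.posSemidef_conjTranspose_mul_self (E - P)
    rwa [hherm.eq, hidem] at this
  have hCpP : Cp * P = Cp := by
    have h2 : (fun i => gpos i * gind i) = gpos := by
      funext i
      by_cases h : 0 < lam i
      · simp [hgpos, hgind, h]
      · simp [hgpos, hgind, h, max_eq_right (not_lt.mp h)]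
    rw [hCpdef, hPdef, hmul, h2]
  have hCP : C * P = Cp := by
    rw [hspec, hPdef, hmul, hCpdef, hpos_eq]
  refine ⟨P, Cp, hPpsd, hEPpsd, hCppsd, hCpCpsd, ?_, ?_, hCP, hCpE⟩
  · rw [Matrix.mul_sub, hCpE, hCpP, sub_self]
  · rw [Matrix.sub_mul, hCP, hCpP, sub_self]

/-- **Theorem 2.1.1** (optimal detection criterion).  `H` is modelled as `Fin n → ℂ`,
operators as `n × n` complex matrices.  `E` is an orthogonal projection, `C` a Hermitian
operator with `C * E = C`.  An admissible `D₀` (i.e. `0 ≤ D₀ ≤ E`) maximizes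
`Tr (C * D)` over admissible `D` iff there is `B₀ ≥ 0, C` with `B₀ * (E - D₀) = 0` and
`(B₀ - C) * D₀ = 0`; such a `B₀` solves the dual problem of minimizing `Tr (B * E)` over
`B ≥ 0, C`, the same conditions (for some admissible `D₀`) characterize dual optimality,
and the optimal values coincide. -/
theorem optimal_detection_criterion {n : ℕ}
    (E C : Matrix (Fin n) (Fin n) ℂ)
    (hE : E.IsHermitian) (hEproj : E * E = E)
    (hC : C.IsHermitian) (hCE : C * E = C) :
    (∀ D₀ : Matrix (Fin n) (Fin n) ℂ, D₀.PosSemidef → (E - D₀).PosSemidef →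
      ((∀ D : Matrix (Fin n) (Fin n) ℂ, D.PosSemidef → (E - D).PosSemidef →
          ((C * D).trace).re ≤ ((C * D₀).trace).re) ↔
        (∃ B₀ : Matrix (Fin n) (Fin n) ℂ, B₀.PosSemidef ∧ (B₀ - C).PosSemidef ∧
          B₀ * (E - D₀) = 0 ∧ (B₀ - C) * D₀ = 0))) ∧
    (∀ D₀ B₀ : Matrix (Fin n) (Fin n) ℂ, D₀.PosSemidef → (E - D₀).PosSemidef →
      B₀.PosSemidef → (B₀ - C).PosSemidef →
      B₀ * (E - D₀) = 0 → (B₀ - C) * D₀ = 0 →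
      ∀ B : Matrix (Fin n) (Fin n) ℂ, B.PosSemidef → (B - C).PosSemidef →
        ((B₀ * E).trace).re ≤ ((B * E).trace).re) ∧
    (∀ B₀ : Matrix (Fin n) (Fin n) ℂ, B₀.PosSemidef → (B₀ - C).PosSemidef →
      ((∀ B : Matrix (Fin n) (Fin n) ℂ, B.PosSemidef → (B - C).PosSemidef →
          ((B₀ * E).trace).re ≤ ((B * E).trace).re) ↔
        (∃ D₀ : Matrix (Fin n) (Fin n) ℂ, D₀.PosSemidef ∧ (E - D₀).PosSemidef ∧
          B₀ * (E - D₀) = 0 ∧ (B₀ - C) * D₀ = 0))) ∧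
    sSup {t : ℝ | ∃ D : Matrix (Fin n) (Fin n) ℂ,
        D.PosSemidef ∧ (E - D).PosSemidef ∧ t = ((C * D).trace).re} =
      sInf {t : ℝ | ∃ B : Matrix (Fin n) (Fin n) ℂ,
        B.PosSemidef ∧ (B - C).PosSemidef ∧ t = ((B * E).trace).re} := by
  obtain ⟨P, Cp, hPpsd, hEPpsd, hCppsd, hCpCpsd, hslack1, hslack2, hCP, hCpE⟩ :=
    key_construction E C hE hEproj hC hCE
  -- weak duality
  have WD : ∀ D B : Matrix (Fin n) (Fin n) ℂ, D.PosSemidef → (E - D).PosSemidef →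
      B.PosSemidef → (B - C).PosSemidef → ((C * D).trace).re ≤ ((B * E).trace).re := by
    intro D B hD hED hB hBC
    have h1 := (trace_psd_mul hB hED).1
    have h2 := (trace_psd_mul hBC hD).1
    have heq : (B * (E - D)).trace + ((B - C) * D).trace = (B * E).trace - (C * D).trace := by
      rw [Matrix.mul_sub, Matrix.sub_mul, Matrix.trace_sub, Matrix.trace_sub]; ring
    have h3 := congrArg Complex.re heq
    simp only [Complex.add_re, Complex.sub_re] at h3
    linarith
  -- complementary slackness implies equal values
  have CS : ∀ D₀ B₀ : Matrix (Fin n) (Fin n) ℂ, B₀ * (E - D₀) = 0 → (B₀ - C) * D₀ = 0 →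
      (C * D₀).trace = (B₀ * E).trace := by
    intro D₀ B₀ h1 h2
    have e1 : B₀ * E = B₀ * D₀ := by
      have : B₀ * E - B₀ * D₀ = 0 := by rw [← Matrix.mul_sub]; exact h1
      exact sub_eq_zero.mp this
    have e2 : B₀ * D₀ = C * D₀ := by
      have : B₀ * D₀ - C * D₀ = 0 := by rw [← Matrix.sub_mul]; exact h2
      exact sub_eq_zero.mp this
    rw [e1, e2]
  have hval : (C * P).trace = (Cp * E).trace := CS P Cp hslack1 hslack2
  refine ⟨?_, ?_, ?_, ?_⟩
  · -- primal characterization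
    intro D₀ hD₀ hED₀
    constructor
    · intro hopt
      have h1 : ((C * P).trace).re ≤ ((C * D₀).trace).re := hopt P hPpsd hEPpsd
      have h2 : ((C * D₀).trace).re ≤ ((Cp * E).trace).re := WD D₀ Cp hD₀ hED₀ hCppsd hCpCpsd
      have hvre := congrArg Complex.re hval
      have heq : (Cp * (E - D₀)).trace + ((Cp - C) * D₀).trace
          = (Cp * E).trace - (C * D₀).trace := by
        rw [Matrix.mul_sub, Matrix.sub_mul, Matrix.trace_sub, Matrix.trace_sub]; ring
      have h3 := congrArg Complex.re heq
      simp only [Complex.add_re, Complex.sub_re] at h3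
      have ha := (trace_psd_mul hCppsd hED₀).1
      have hb := (trace_psd_mul hCpCpsd hD₀).1
      exact ⟨Cp, hCppsd, hCpCpsd,
        (trace_psd_mul hCppsd hED₀).2 (by linarith),
        (trace_psd_mul hCpCpsd hD₀).2 (by linarith)⟩
    · rintro ⟨B₀, hB₀, hB₀C, hs1, hs2⟩ D hD hED
      have h1 : ((C * D).trace).re ≤ ((B₀ * E).trace).re := WD D B₀ hD hED hB₀ hB₀C
      have h2 := congrArg Complex.re (CS D₀ B₀ hs1 hs2)
      linarith
  · -- any slack pair gives a dual optimum
    intro D₀ B₀ hD₀ hED₀ hB₀ hB₀C hs1 hs2 B hB hBC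
    have h1 := congrArg Complex.re (CS D₀ B₀ hs1 hs2)
    have h2 : ((C * D₀).trace).re ≤ ((B * E).trace).re := WD D₀ B hD₀ hED₀ hB hBC
    linarith
  · -- dual characterization
    intro B₀ hB₀ hB₀C
    constructor
    · intro hopt
      have h1 : ((B₀ * E).trace).re ≤ ((Cp * E).trace).re := hopt Cp hCppsd hCpCpsd
      have h2 : ((C * P).trace).re ≤ ((B₀ * E).trace).re := WD P B₀ hPpsd hEPpsd hB₀ hB₀C
      have hvre := congrArg Complex.re hval
      have heq : (B₀ * (E - P)).trace + ((B₀ - C) * P).trace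
          = (B₀ * E).trace - (C * P).trace := by
        rw [Matrix.mul_sub, Matrix.sub_mul, Matrix.trace_sub, Matrix.trace_sub]; ring
      have h3 := congrArg Complex.re heq
      simp only [Complex.add_re, Complex.sub_re] at h3
      have ha := (trace_psd_mul hB₀ hEPpsd).1
      have hb := (trace_psd_mul hB₀C hPpsd).1
      exact ⟨P, hPpsd, hEPpsd,
        (trace_psd_mul hB₀ hEPpsd).2 (by linarith),
        (trace_psd_mul hB₀C hPpsd).2 (by linarith)⟩
    · rintro ⟨D₀, hD₀, hED₀, hs1, hs2⟩ B hB hBC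
      have h1 := congrArg Complex.re (CS D₀ B₀ hs1 hs2)
      have h2 : ((C * D₀).trace).re ≤ ((B * E).trace).re := WD D₀ B hD₀ hED₀ hB hBC
      linarith
  · -- equality of optimal values
    set v : ℝ := ((C * P).trace).re with hv
    have hvre := congrArg Complex.re hval
    have hvS : v ∈ {t : ℝ | ∃ D : Matrix (Fin n) (Fin n) ℂ,
        D.PosSemidef ∧ (E - D).PosSemidef ∧ t = ((C * D).trace).re} := ⟨P, hPpsd, hEPpsd, rfl⟩
    have hvT : v ∈ {t : ℝ | ∃ B : Matrix (Fin n) (Fin n) ℂ,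
        B.PosSemidef ∧ (B - C).PosSemidef ∧ t = ((B * E).trace).re} :=
      ⟨Cp, hCppsd, hCpCpsd, hvre⟩
    have ubS : ∀ t ∈ {t : ℝ | ∃ D : Matrix (Fin n) (Fin n) ℂ,
        D.PosSemidef ∧ (E - D).PosSemidef ∧ t = ((C * D).trace).re}, t ≤ v := by
      rintro t ⟨D, hD, hED, rfl⟩
      have := WD D Cp hD hED hCppsd hCpCpsd
      linarith
    have lbT : ∀ t ∈ {t : ℝ | ∃ B : Matrix (Fin n) (Fin n) ℂ,
        B.PosSemidef ∧ (B - C).PosSemidef ∧ t = ((B * E).trace).re}, v ≤ t := by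
      rintro t ⟨B, hB, hBC, rfl⟩
      exact WD P B hPpsd hEPpsd hB hBC
    have h1 : sSup {t : ℝ | ∃ D : Matrix (Fin n) (Fin n) ℂ,
        D.PosSemidef ∧ (E - D).PosSemidef ∧ t = ((C * D).trace).re} = v :=
      le_antisymm (csSup_le ⟨v, hvS⟩ ubS) (le_csSup ⟨v, ubS⟩ hvS)
    have h2 : sInf {t : ℝ | ∃ B : Matrix (Fin n) (Fin n) ℂ,
        B.PosSemidef ∧ (B - C).PosSemidef ∧ t = ((B * E).trace).re} = v :=
      le_antisymm (csInf_le ⟨v, lbT⟩ hvT) (le_csInf ⟨v, hvT⟩ lbT)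
    rw [h1, h2]
end

section
/- Let H be a finite-dimensional complex inner product space, C a Hermitian operator on H with spectral decomposition C = Σ_n κ_n|χ_n⟩⟨χ_n|, and E an orthogonal projection with CE = C. Then sup{Tr(CD) : 0 ≤ D ≤ E} = Tr(C₊) = Σ_{κ_n>0} κ_n, where C₊ = Σ_{κ_n>0} κ_n|χ_n⟩⟨χ_n| is the positive part of C; the supremum is attained at D° = E₊, the orthogonal projection onto the span of the eigenvectors of C with positive eigenvalues, and the dual infimum inf{Tr(BE) : B ≥ 0, B ≥ C} is attained at B° = C₊. -/
open Matrix
open scoped ComplexOrder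

noncomputable section

/-- The positive part `C₊ = ∑_{κ i > 0} κ i |χ i⟩⟨χ i|` of a Hermitian operator with
spectral data `(χ, κ)`. -/
noncomputable def posPartM {n : ℕ} (χ : Fin n → (Fin n → ℂ)) (κ : Fin n → ℝ) :
    Matrix (Fin n) (Fin n) ℂ :=
  ∑ i ∈ Finset.univ.filter (fun i => 0 < κ i),
    (κ i : ℂ) • Matrix.vecMulVec (χ i) (star (χ i))

/-- The orthogonal projection `E₊ = ∑_{κ i > 0} |χ i⟩⟨χ i|` onto the span of the
eigenvectors with positive eigenvalues. -/
noncomputable def posProjM {n : ℕ} (χ : Fin n → (Fin n → ℂ)) (κ : Fin n → ℝ) :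
    Matrix (Fin n) (Fin n) ℂ :=
  ∑ i ∈ Finset.univ.filter (fun i => 0 < κ i), Matrix.vecMulVec (χ i) (star (χ i))

variable {n : ℕ}


lemma trace_vecMulVec' (u v : Fin n → ℂ) :
    (Matrix.vecMulVec u v).trace = v ⬝ᵥ u := by
  simp [Matrix.trace, Matrix.diag, Matrix.vecMulVec_apply, dotProduct, mul_comm]

lemma vecMulVec_mul_vecMulVec' (u v w x : Fin n → ℂ) :
    Matrix.vecMulVec u v * Matrix.vecMulVec w x = (v ⬝ᵥ w) • Matrix.vecMulVec u x := by
  ext a b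
  simp only [Matrix.mul_apply, Matrix.vecMulVec_apply, Matrix.smul_apply, dotProduct,
    smul_eq_mul, Finset.sum_mul]
  exact Finset.sum_congr rfl fun c _ => by ring

lemma posSemidef_vecMulVec_star (u : Fin n → ℂ) :
    (Matrix.vecMulVec u (star u)).PosSemidef := by
  rw [Matrix.posSemidef_iff_dotProduct_mulVec]
  constructor
  · ext a b
    simp [Matrix.conjTranspose_apply, Matrix.vecMulVec_apply, mul_comm]
  · intro x
    have h1 : Matrix.vecMulVec u (star u) *ᵥ x = (star u ⬝ᵥ x) • u := by
      ext a
      simp only [Matrix.mulVec, Matrix.vecMulVec_apply, dotProduct, Pi.smul_apply,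
        smul_eq_mul, Pi.star_apply]
      rw [Finset.sum_mul]
      exact Finset.sum_congr rfl fun c _ => by ring
    have h2 : star x ⬝ᵥ u = star (star u ⬝ᵥ x) := by
      simp [dotProduct, Finset.sum_comm, mul_comm]
    rw [h1, dotProduct_smul, smul_eq_mul, h2]
    exact mul_star_self_nonneg _

lemma re_trace_nonneg {M : Matrix (Fin n) (Fin n) ℂ} (hM : M.PosSemidef) :
    0 ≤ (M.trace).re := by
  have h : ∀ i, 0 ≤ (M i i).re := by
    intro i
    have := hM.re_dotProduct_nonneg (Pi.single i 1)
    simpa [Matrix.mulVec_single, dotProduct, Pi.single_apply] using this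
  rw [Matrix.trace, Complex.re_sum]
  exact Finset.sum_nonneg fun i _ => h i

lemma re_trace_mul_nonneg {A B : Matrix (Fin n) (Fin n) ℂ}
    (hA : A.PosSemidef) (hB : B.PosSemidef) : 0 ≤ ((A * B).trace).re := by
  obtain ⟨X, hX⟩ : ∃ X : Matrix (Fin n) (Fin n) ℂ, A = Xᴴ * X := by
    open scoped MatrixOrder in
    exact ⟨CFC.sqrt A, by rw [← Matrix.star_eq_conjTranspose,
      (CFC.sqrt_nonneg A).isSelfAdjoint.star_eq, CFC.sqrt_mul_sqrt_self A hA.nonneg]⟩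
  have h : (A * B).trace = (X * B * Xᴴ).trace := by
    rw [hX]; exact (Matrix.trace_mul_cycle X B Xᴴ).symm
  rw [h]
  exact re_trace_nonneg (hB.mul_mul_conjTranspose_same X)

lemma posSemidef_real_smul {M : Matrix (Fin n) (Fin n) ℂ} (hM : M.PosSemidef)
    {r : ℝ} (hr : 0 ≤ r) : ((r : ℂ) • M).PosSemidef := by
  rw [Matrix.posSemidef_iff_dotProduct_mulVec]
  constructor
  · rw [Matrix.IsHermitian, Matrix.conjTranspose_smul, hM.1]
    congr 1
    simp
  · intro x
    rw [Matrix.smul_mulVec, dotProduct_smul, smul_eq_mul]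
    exact mul_nonneg (by exact_mod_cast hr) ((Matrix.posSemidef_iff_dotProduct_mulVec.mp hM).2 x)

lemma psd_sum {ι : Type*} {s : Finset ι} {f : ι → Matrix (Fin n) (Fin n) ℂ}
    (h : ∀ i ∈ s, (f i).PosSemidef) : (∑ i ∈ s, f i).PosSemidef :=
  Finset.sum_induction f _ (fun _ _ ha hb => ha.add hb) Matrix.PosSemidef.zero h

/-- Maximal degree of contrast of an optimal detector:
`sup {Tr (C D) : 0 ≤ D ≤ E} = Tr C₊ = ∑_{κ_n > 0} κ_n`, attained at `D° = E₊`, while the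
dual infimum `inf {Tr (B E) : B ≥ 0, C}` is attained at `B° = C₊`. -/
theorem optimal_detection_value {n : ℕ}
    (E C : Matrix (Fin n) (Fin n) ℂ)
    (χ : Fin n → (Fin n → ℂ)) (κ : Fin n → ℝ)
    (hON : ∀ i j, star (χ i) ⬝ᵥ χ j = if i = j then 1 else 0)
    (hspec : C = ∑ i, (κ i : ℂ) • Matrix.vecMulVec (χ i) (star (χ i)))
    (hE : E.IsHermitian) (hEproj : E * E = E) (hCE : C * E = C) :
    (posPartM χ κ).trace = ∑ i ∈ Finset.univ.filter (fun i => 0 < κ i), (κ i : ℂ) ∧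
    (posProjM χ κ).PosSemidef ∧ (E - posProjM χ κ).PosSemidef ∧
    ((C * posProjM χ κ).trace).re = ((posPartM χ κ).trace).re ∧
    IsGreatest {t : ℝ | ∃ D : Matrix (Fin n) (Fin n) ℂ,
        D.PosSemidef ∧ (E - D).PosSemidef ∧ t = ((C * D).trace).re}
      (((posPartM χ κ).trace).re) ∧
    (posPartM χ κ).PosSemidef ∧ (posPartM χ κ - C).PosSemidef ∧
    IsLeast {t : ℝ | ∃ B : Matrix (Fin n) (Fin n) ℂ,
        B.PosSemidef ∧ (B - C).PosSemidef ∧ t = ((B * E).trace).re}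
      (((posPartM χ κ * E).trace).re) := by
  set Q : Fin n → Matrix (Fin n) (Fin n) ℂ :=
    fun i => Matrix.vecMulVec (χ i) (star (χ i)) with hQdef
  have hQij : ∀ i j, Q i * Q j = if i = j then Q i else 0 := by
    intro i j
    rw [hQdef]
    simp only
    rw [vecMulVec_mul_vecMulVec', hON]
    split
    · next h => subst h; simp
    · simp
  have hQherm : ∀ i, (Q i)ᴴ = Q i := fun i => (posSemidef_vecMulVec_star (χ i)).1
  have hCQ : ∀ j, Q j * C = (κ j : ℂ) • Q j := by
    intro j
    rw [hspec, Finset.mul_sum]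
    have h : ∀ i, Q j * ((κ i : ℂ) • Q i) = if j = i then (κ j : ℂ) • Q j else 0 := by
      intro i
      rw [mul_smul_comm, hQij]
      split
      · next h => subst h; rfl
      · simp
    refine (Finset.sum_congr rfl fun i _ => h i).trans ?_
    simp [Finset.sum_ite_eq]
  have hCQ' : ∀ j, C * Q j = (κ j : ℂ) • Q j := by
    intro j
    rw [hspec, Finset.sum_mul]
    have h : ∀ i, ((κ i : ℂ) • Q i) * Q j = if i = j then (κ j : ℂ) • Q j else 0 := by
      intro i
      rw [smul_mul_assoc, hQij]
      split
      · next h => subst h; rfl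
      · simp
    refine (Finset.sum_congr rfl fun i _ => h i).trans ?_
    simp [Finset.sum_ite_eq']
  have hQE : ∀ j, κ j ≠ 0 → Q j * E = Q j := by
    intro j hj
    have h1 : Q j * C * E = Q j * C := by rw [Matrix.mul_assoc, hCE]
    rw [hCQ, smul_mul_assoc] at h1
    exact smul_right_injective _ (Complex.ofReal_ne_zero.mpr hj) h1
  have hEQ : ∀ j, κ j ≠ 0 → E * Q j = Q j := by
    intro j hj
    have := congrArg Matrix.conjTranspose (hQE j hj)
    rwa [Matrix.conjTranspose_mul, hQherm, hE] at this
  have hCP : C * posProjM χ κ = posPartM χ κ := by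
    rw [posProjM, Finset.mul_sum, posPartM]
    exact Finset.sum_congr rfl fun j _ => hCQ' j
  have hPE : posProjM χ κ * E = posProjM χ κ := by
    rw [posProjM, Finset.sum_mul]
    exact Finset.sum_congr rfl fun j hj =>
      hQE j (ne_of_gt (Finset.mem_filter.mp hj).2)
  have hEP : E * posProjM χ κ = posProjM χ κ := by
    rw [posProjM, Finset.mul_sum]
    exact Finset.sum_congr rfl fun j hj =>
      hEQ j (ne_of_gt (Finset.mem_filter.mp hj).2)
  have hCpE : posPartM χ κ * E = posPartM χ κ := by
    rw [posPartM, Finset.sum_mul]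
    refine Finset.sum_congr rfl fun j hj => ?_
    rw [smul_mul_assoc, hQE j (ne_of_gt (Finset.mem_filter.mp hj).2)]
  have hPP : posProjM χ κ * posProjM χ κ = posProjM χ κ := by
    rw [posProjM, Finset.sum_mul_sum]
    have hQij' : ∀ i j, Matrix.vecMulVec (χ i) (star (χ i)) * Matrix.vecMulVec (χ j) (star (χ j))
        = if i = j then Matrix.vecMulVec (χ i) (star (χ i)) else 0 := hQij
    simp only [hQij']
    refine Finset.sum_congr rfl fun i hi => ?_
    rw [Finset.sum_ite_eq]
    simp [hi]
  have hPherm : (posProjM χ κ)ᴴ = posProjM χ κ := by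
    rw [posProjM, Matrix.conjTranspose_sum]
    exact Finset.sum_congr rfl fun j _ => hQherm j
  have hP_psd : (posProjM χ κ).PosSemidef :=
    psd_sum fun i _ => posSemidef_vecMulVec_star (χ i)
  have hCp_psd : (posPartM χ κ).PosSemidef :=
    psd_sum fun i hi => posSemidef_real_smul (posSemidef_vecMulVec_star (χ i))
      (le_of_lt (Finset.mem_filter.mp hi).2)
  have hEmP : (E - posProjM χ κ).PosSemidef := by
    have hMh : (E - posProjM χ κ)ᴴ = E - posProjM χ κ := by
      rw [Matrix.conjTranspose_sub, hE, hPherm]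
    have hMM : (E - posProjM χ κ) * (E - posProjM χ κ) = E - posProjM χ κ := by
      rw [Matrix.sub_mul, Matrix.mul_sub, Matrix.mul_sub, hEproj, hPP, hEP, hPE]
      abel
    have h := Matrix.posSemidef_conjTranspose_mul_self (E - posProjM χ κ)
    rwa [hMh, hMM] at h
  have hCpC : (posPartM χ κ - C).PosSemidef := by
    have hsplit : posPartM χ κ - C =
        ∑ i ∈ Finset.univ.filter (fun i => ¬ 0 < κ i), ((-κ i : ℝ) : ℂ) • Q i := by
      rw [hspec, posPartM,
        ← Finset.sum_filter_add_sum_filter_not Finset.univ (fun i => 0 < κ i)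
          (fun i => (κ i : ℂ) • Q i)]
      push_cast [neg_smul]
      rw [Finset.sum_neg_distrib]
      abel
    rw [hsplit]
    exact psd_sum fun i hi => posSemidef_real_smul (posSemidef_vecMulVec_star (χ i))
      (neg_nonneg.mpr (le_of_not_gt (Finset.mem_filter.mp hi).2))
  refine ⟨?_, hP_psd, hEmP, by rw [hCP], ⟨⟨posProjM χ κ, hP_psd, hEmP, by rw [hCP]⟩, ?_⟩,
    hCp_psd, hCpC, ⟨posPartM χ κ, hCp_psd, hCpC, rfl⟩, ?_⟩
  · rw [posPartM, Matrix.trace_sum]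
    refine Finset.sum_congr rfl fun i _ => ?_
    rw [Matrix.trace_smul, trace_vecMulVec', hON]
    simp
  · rintro t ⟨D, hD, hED, rfl⟩
    have h1 := re_trace_mul_nonneg hCpC hD
    have h2 := re_trace_mul_nonneg hCp_psd hED
    rw [Matrix.sub_mul, Matrix.trace_sub, Complex.sub_re] at h1
    rw [Matrix.mul_sub, Matrix.trace_sub, hCpE, Complex.sub_re] at h2
    linarith
  · rintro t ⟨B, hB, hBC, rfl⟩
    have h1 := re_trace_mul_nonneg hB hEmP
    have h2 := re_trace_mul_nonneg hBC hP_psd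
    rw [Matrix.mul_sub, Matrix.trace_sub, Complex.sub_re] at h1
    rw [Matrix.sub_mul, Matrix.trace_sub, Complex.sub_re] at h2
    rw [hCpE, ← hCP]
    linarith
end
end

section
/- Let ψ₀ and ψ₁ be linearly independent vectors in a complex inner product space, set ν₀ = ‖ψ₀‖², ν₁ = ‖ψ₁‖², β = ⟨ψ₀, ψ₁⟩, and let C = |ψ₁⟩⟨ψ₁| − |ψ₀⟩⟨ψ₀| be the degree-of-contrast operator restricted to the two-dimensional subspace spanned by ψ₀ and ψ₁. Then the eigenvalues of C on this subspace are κ± = (ν₁ − ν₀)/2 ± √(((ν₁ + ν₀)/2)² − |β|²); they are real (since |β|² ≤ ν₀ν₁ by the Cauchy–Schwarz inequality), and they satisfy κ₊ ≥ 0 ≥ κ₋. -/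
open scoped ComplexConjugate

noncomputable section

/-- The degree-of-contrast operator `C = |ψ₁⟩⟨ψ₁| − |ψ₀⟩⟨ψ₀|` on a complex inner product
space, acting by `χ ↦ ⟨ψ₁, χ⟩ψ₁ − ⟨ψ₀, χ⟩ψ₀`. -/
noncomputable def contrastOp {H : Type*} [NormedAddCommGroup H] [InnerProductSpace ℂ H]
    (ψ₀ ψ₁ : H) : H →L[ℂ] H :=
  (innerSL ℂ ψ₁).smulRight ψ₁ - (innerSL ℂ ψ₀).smulRight ψ₀

set_option maxHeartbeats 1000000 in
/-- For linearly independent `ψ₀, ψ₁`, with `ν₀ = ‖ψ₀‖²`, `ν₁ = ‖ψ₁‖²`, `β = ⟨ψ₀, ψ₁⟩`,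
the eigenvalues of `C = |ψ₁⟩⟨ψ₁| − |ψ₀⟩⟨ψ₀|` on `span {ψ₀, ψ₁}` are
`κ± = (ν₁ − ν₀)/2 ± √(((ν₁ + ν₀)/2)² − |β|²)`; they are real (`|β|² ≤ ν₀ν₁` by
Cauchy–Schwarz) and satisfy `κ₊ ≥ 0 ≥ κ₋`. -/
theorem contrast_eigenvalues {H : Type*} [NormedAddCommGroup H] [InnerProductSpace ℂ H]
    (ψ₀ ψ₁ : H) (hLI : LinearIndependent ℂ ![ψ₀, ψ₁])
    (ν₀ ν₁ : ℝ) (hν₀ : ν₀ = ‖ψ₀‖ ^ 2) (hν₁ : ν₁ = ‖ψ₁‖ ^ 2)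
    (β : ℂ) (hβ : β = inner ℂ ψ₀ ψ₁)
    (κp κm : ℝ)
    (hκp : κp = (ν₁ - ν₀) / 2 + Real.sqrt (((ν₁ + ν₀) / 2) ^ 2 - ‖β‖ ^ 2))
    (hκm : κm = (ν₁ - ν₀) / 2 - Real.sqrt (((ν₁ + ν₀) / 2) ^ 2 - ‖β‖ ^ 2)) :
    ‖β‖ ^ 2 ≤ ν₀ * ν₁ ∧
    0 ≤ ((ν₁ + ν₀) / 2) ^ 2 - ‖β‖ ^ 2 ∧
    0 ≤ κp ∧ κm ≤ 0 ∧
    (∃ χ ∈ Submodule.span ℂ ({ψ₀, ψ₁} : Set H), χ ≠ 0 ∧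
      contrastOp ψ₀ ψ₁ χ = (κp : ℂ) • χ) ∧
    (∃ χ ∈ Submodule.span ℂ ({ψ₀, ψ₁} : Set H), χ ≠ 0 ∧
      contrastOp ψ₀ ψ₁ χ = (κm : ℂ) • χ) ∧
    (∀ (t : ℝ) (χ : H), χ ∈ Submodule.span ℂ ({ψ₀, ψ₁} : Set H) → χ ≠ 0 →
      contrastOp ψ₀ ψ₁ χ = (t : ℂ) • χ → t = κp ∨ t = κm) := by
  have hpair := LinearIndependent.pair_iff.mp hLI
  have hψ₀ : ψ₀ ≠ 0 := by
    intro h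
    have := hpair 1 0 (by simp [h])
    simpa using this.1
  have hψ₁ : ψ₁ ≠ 0 := by
    intro h
    have := hpair 0 1 (by simp [h])
    simpa using this.2
  have hν₀pos : 0 < ν₀ := by rw [hν₀]; exact pow_pos (norm_pos_iff.mpr hψ₀) 2
  have hν₁pos : 0 < ν₁ := by rw [hν₁]; exact pow_pos (norm_pos_iff.mpr hψ₁) 2
  have hCS : ‖β‖ ≤ ‖ψ₀‖ * ‖ψ₁‖ := by rw [hβ]; exact norm_inner_le_norm ψ₀ ψ₁
  have hCS2 : ‖β‖ ^ 2 ≤ ν₀ * ν₁ := by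
    rw [hν₀, hν₁]
    nlinarith [norm_nonneg β, norm_nonneg ψ₀, norm_nonneg ψ₁]
  have hD : 0 ≤ ((ν₁ + ν₀) / 2) ^ 2 - ‖β‖ ^ 2 := by nlinarith [sq_nonneg (ν₁ - ν₀)]
  set s := Real.sqrt (((ν₁ + ν₀) / 2) ^ 2 - ‖β‖ ^ 2) with hsdef
  have hs2 : s ^ 2 = ((ν₁ + ν₀) / 2) ^ 2 - ‖β‖ ^ 2 := Real.sq_sqrt hD
  have hsnn : 0 ≤ s := Real.sqrt_nonneg _
  have hκppos : 0 ≤ κp := by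
    rw [hκp]; nlinarith [hs2, hsnn, hCS2]
  have hκmneg : κm ≤ 0 := by
    rw [hκm]; nlinarith [hs2, hsnn, hCS2]
  have hkey_p : (ν₀ + κp) * (ν₁ - κp) = ‖β‖ ^ 2 := by
    rw [hκp]; nlinarith [hs2]
  have hkey_m : (ν₀ + κm) * (ν₁ - κm) = ‖β‖ ^ 2 := by
    rw [hκm]; nlinarith [hs2]
  have hν₀κp : 0 < ν₀ + κp := by rw [hκp]; nlinarith [hsnn]
  have hν₁κm : 0 < ν₁ - κm := by rw [hκm]; nlinarith [hsnn]
  have h0mem : ψ₀ ∈ Submodule.span ℂ ({ψ₀, ψ₁} : Set H) :=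
    Submodule.subset_span (by simp)
  have h1mem : ψ₁ ∈ Submodule.span ℂ ({ψ₀, ψ₁} : Set H) :=
    Submodule.subset_span (by simp)
  have hββ : β * (starRingEnd ℂ) β = (‖β‖ : ℂ) ^ 2 := RCLike.mul_conj β
  have hi00 : (inner ℂ ψ₀ ψ₀ : ℂ) = (ν₀ : ℂ) := by
    rw [inner_self_eq_norm_sq_to_K, hν₀]; norm_cast
  have hi11 : (inner ℂ ψ₁ ψ₁ : ℂ) = (ν₁ : ℂ) := by
    rw [inner_self_eq_norm_sq_to_K, hν₁]; norm_cast
  have hi01 : (inner ℂ ψ₀ ψ₁ : ℂ) = β := hβ.symm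
  have hi10 : (inner ℂ ψ₁ ψ₀ : ℂ) = (starRingEnd ℂ) β := by
    rw [← inner_conj_symm, hi01]
  refine ⟨hCS2, hD, hκppos, hκmneg, ?_, ?_, ?_⟩
  · -- eigenvector for κp
    refine ⟨(-β) • ψ₀ + ((ν₀ : ℂ) + κp) • ψ₁,
      Submodule.add_mem _ (Submodule.smul_mem _ _ h0mem) (Submodule.smul_mem _ _ h1mem),
      ?_, ?_⟩
    · intro h
      have := (hpair _ _ h).2
      have h2 : ν₀ + κp = 0 := by exact_mod_cast this
      linarith
    · have hkeyC : ((ν₀ : ℂ) + κp) * ((ν₁ : ℂ) - κp) = (‖β‖ : ℂ) ^ 2 := by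
        exact_mod_cast hkey_p
      simp only [contrastOp, ContinuousLinearMap.sub_apply, ContinuousLinearMap.smulRight_apply,
        innerSL_apply_apply, inner_add_right, inner_smul_right, hi00, hi11, hi01, hi10]
      match_scalars
      · linear_combination hkeyC - hββ
      · ring
  · -- eigenvector for κm
    refine ⟨((κm : ℂ) - ν₁) • ψ₀ + ((starRingEnd ℂ) β) • ψ₁,
      Submodule.add_mem _ (Submodule.smul_mem _ _ h0mem) (Submodule.smul_mem _ _ h1mem),
      ?_, ?_⟩
    · intro h
      have := (hpair _ _ h).1
      have h2 : κm - ν₁ = 0 := by exact_mod_cast this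
      linarith
    · have hkeyC : ((ν₀ : ℂ) + κm) * ((ν₁ : ℂ) - κm) = (‖β‖ : ℂ) ^ 2 := by
        exact_mod_cast hkey_m
      simp only [contrastOp, ContinuousLinearMap.sub_apply, ContinuousLinearMap.smulRight_apply,
        innerSL_apply_apply, inner_add_right, inner_smul_right, hi00, hi11, hi01, hi10]
      match_scalars
      · ring
      · linear_combination hkeyC - hββ
  · -- uniqueness
    intro t χ hmem hne heig
    obtain ⟨a, b, rfl⟩ := Submodule.mem_span_pair.mp hmem
    have h2 : (-( (ν₀ : ℂ) * a + β * b) - (t : ℂ) * a) • ψ₀ +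
        (((starRingEnd ℂ) β * a + (ν₁ : ℂ) * b) - (t : ℂ) * b) • ψ₁ = 0 := by
      have h := sub_eq_zero.mpr heig
      rw [← h]
      simp only [contrastOp, ContinuousLinearMap.sub_apply, ContinuousLinearMap.smulRight_apply,
        innerSL_apply_apply, inner_add_right, inner_smul_right, hi00, hi11, hi01, hi10]
      module
    obtain ⟨hc₀, hc₁⟩ := hpair _ _ h2
    have hab : a ≠ 0 ∨ b ≠ 0 := by
      by_contra hcon
      push_neg at hcon
      exact hne (by simp [hcon.1, hcon.2])
    have hE : ((t : ℂ) + ν₀) * ((ν₁ : ℂ) - t) - (‖β‖ : ℂ) ^ 2 = 0 := by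
      rcases hab with ha | hb
      · have h3 : (((t : ℂ) + ν₀) * ((ν₁ : ℂ) - t) - (‖β‖ : ℂ) ^ 2) * a = 0 := by
          linear_combination (-((ν₁ : ℂ) - t)) * hc₀ - β * hc₁ + a * hββ
        rcases mul_eq_zero.mp h3 with h | h
        · exact h
        · exact absurd h ha
      · have h3 : (((t : ℂ) + ν₀) * ((ν₁ : ℂ) - t) - (‖β‖ : ℂ) ^ 2) * b = 0 := by
          linear_combination (starRingEnd ℂ) β * hc₀ + ((t : ℂ) + ν₀) * hc₁ + b * hββ
        rcases mul_eq_zero.mp h3 with h | h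
        · exact h
        · exact absurd h hb
    have hEr : (t + ν₀) * (ν₁ - t) = ‖β‖ ^ 2 := by
      have := sub_eq_zero.mp hE
      exact_mod_cast this
    have hfac : (t - κp) * (t - κm) = 0 := by
      rw [hκp, hκm]; nlinarith [hs2, hEr]
    rcases mul_eq_zero.mp hfac with h | h
    · exact Or.inl (by linarith [sub_eq_zero.mp h])
    · exact Or.inr (by linarith [sub_eq_zero.mp h])
end
end

section
/- Let σ = [σ_ik] be a positive semidefinite block operator on K^m = ⊕_{i=1}^m K_i (the correlation matrix σ_ik = H_iH_k* of m wave patterns) and h = σ^{1/2}. If the block-diagonal part ϵ(h) of h commutes with h, then the optimality conditions of the identification problem are satisfied with μ_i° = (h_ii)², the optimal decision operators in signal space are δ_i° = 1_i (equivalently D_i° = V_i*V_i with V = h⁻¹H), and the quality of optimal identification is ϰ° = Σ_{i=1}^m Tr((h_ii)²). In particular, for m pure patterns given by nonorthogonal amplitudes ψ₁, …, ψ_m (so K_i = ℂ and σ = [⟨ψ_i, ψ_k⟩] is an m×m matrix) whose square root h = √σ has equal diagonal entries h_ii = a for all i, the maximal intensity of optimally separated signals is ϰ° = m·a² = (Tr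 σ^{1/2})²/m. -/
open Matrix
open scoped ComplexOrder

set_option linter.unusedSectionVars false
set_option maxHeartbeats 2000000

section AuxLemmas

variable {n : Type*} [Fintype n] [DecidableEq n]

lemma dp_cs (u v : n → ℂ) :
    ‖star u ⬝ᵥ v‖ ^ 2 ≤ (star u ⬝ᵥ u).re * (star v ⬝ᵥ v).re := by
  have h1 := norm_inner_le_norm (𝕜 := ℂ) ((WithLp.equiv 2 (n → ℂ)).symm u)
    ((WithLp.equiv 2 (n → ℂ)).symm v)
  rw [WithLp.equiv_symm_apply, EuclideanSpace.inner_toLp_toLp, dotProduct_comm] at h1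
  have h2 : (star u ⬝ᵥ u).re = ‖(WithLp.equiv 2 (n → ℂ)).symm u‖ ^ 2 := by
    rw [WithLp.equiv_symm_apply, dotProduct_comm, ← EuclideanSpace.inner_toLp_toLp]
    exact inner_self_eq_norm_sq (𝕜 := ℂ) _
  have h3 : (star v ⬝ᵥ v).re = ‖(WithLp.equiv 2 (n → ℂ)).symm v‖ ^ 2 := by
    rw [WithLp.equiv_symm_apply, dotProduct_comm, ← EuclideanSpace.inner_toLp_toLp]
    exact inner_self_eq_norm_sq (𝕜 := ℂ) _
  rw [h2, h3]
  calc ‖star u ⬝ᵥ v‖ ^ 2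
      ≤ (‖(WithLp.equiv 2 (n → ℂ)).symm u‖ * ‖(WithLp.equiv 2 (n → ℂ)).symm v‖) ^ 2 :=
        pow_le_pow_left₀ (norm_nonneg _) h1 2
    _ = _ := by ring

lemma dp_sum {β : Type*} (x : n → ℂ) (S : Finset β) (M : β → Matrix n n ℂ) :
    star x ⬝ᵥ ((∑ s ∈ S, M s) *ᵥ x) = ∑ s ∈ S, star x ⬝ᵥ (M s *ᵥ x) := by
  classical
  induction S using Finset.induction with
  | empty => simp
  | insert _ _ h ih =>
      rw [Finset.sum_insert h, Finset.sum_insert h, add_mulVec, dotProduct_add, ih]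

lemma diag_entry_nonneg {M : Matrix n n ℂ} (hM : M.PosSemidef) (i : n) : 0 ≤ M i i := by
  simpa [dotProduct, mulVec, Pi.single_apply] using hM.dotProduct_mulVec_nonneg (Pi.single i 1)

lemma trace_re_nonneg {M : Matrix n n ℂ} (hM : M.PosSemidef) : 0 ≤ M.trace.re := by
  have : M.trace = ∑ i, M i i := rfl
  rw [this, Complex.re_sum]
  exact Finset.sum_nonneg fun i _ => (Complex.nonneg_iff.mp (diag_entry_nonneg hM i)).1

open scoped MatrixOrder in
lemma psd_sqrt_ex {A : Matrix n n ℂ} (hA : A.PosSemidef) :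
    ∃ g : Matrix n n ℂ, gᴴ = g ∧ g * g = A := by
  obtain ⟨X, hX, -, hXX⟩ := CFC.exists_sqrt_of_isSelfAdjoint_of_quasispectrumRestricts
    hA.isHermitian (QuasispectrumRestricts.nnreal_of_nonneg hA.nonneg)
  exact ⟨X, hX, hXX⟩

lemma trace_mul_re_nonneg {A B : Matrix n n ℂ} (hA : A.PosSemidef) (hB : B.PosSemidef) :
    0 ≤ ((A * B).trace).re := by
  obtain ⟨g, hgH, hgg⟩ := psd_sqrt_ex hA
  have h1 : A * B = g * (g * B) := by rw [← mul_assoc, hgg]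
  rw [h1, trace_mul_comm]
  have h3 : (gᴴ * B * g).PosSemidef := hB.conjTranspose_mul_mul_same _
  rw [hgH] at h3
  exact trace_re_nonneg h3

end AuxLemmas

section Core

variable {N m : ℕ}

lemma eps_mul_P (P : Fin m → Matrix (Fin N) (Fin N) ℂ)
    (hPi : ∀ i, P i * P i = P i) (hPo : ∀ i j, i ≠ j → P i * P j = 0)
    (h : Matrix (Fin N) (Fin N) ℂ) (i : Fin m) :
    (∑ j, P j * h * P j) * P i = P i * h * P i := by
  rw [Finset.sum_mul, Finset.sum_eq_single i]
  · rw [mul_assoc, hPi i]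
  · intro j _ hj
    rw [mul_assoc, hPo j i hj, mul_zero]
  · intro hi; exact absurd (Finset.mem_univ i) hi

lemma P_mul_eps (P : Fin m → Matrix (Fin N) (Fin N) ℂ)
    (hPi : ∀ i, P i * P i = P i) (hPo : ∀ i j, i ≠ j → P i * P j = 0)
    (h : Matrix (Fin N) (Fin N) ℂ) (i : Fin m) :
    P i * (∑ j, P j * h * P j) = P i * h * P i := by
  rw [Finset.mul_sum, Finset.sum_eq_single i]
  · rw [← mul_assoc, ← mul_assoc, hPi i]
  · intro j _ hj
    rw [← mul_assoc, ← mul_assoc, hPo i j (Ne.symm hj), zero_mul, zero_mul]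
  · intro hi; exact absurd (Finset.mem_univ i) hi

lemma key_psd (P : Fin m → Matrix (Fin N) (Fin N) ℂ)
    (hPh : ∀ i, (P i).IsHermitian) (hPi : ∀ i, P i * P i = P i)
    (hPo : ∀ i j, i ≠ j → P i * P j = 0) (hPsum : ∑ i, P i = 1)
    (h : Matrix (Fin N) (Fin N) ℂ) (hh : h.PosSemidef)
    (hcomm : (∑ i, P i * h * P i) * h = h * (∑ i, P i * h * P i)) (i : Fin m) :
    (h * (∑ j, P j * h * P j) - h * P i * h).PosSemidef := by
  classical
  set ε := ∑ j, P j * h * P j with hεdef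
  have hhH : hᴴ = h := hh.1
  have hεH : ε.IsHermitian := by
    show εᴴ = ε
    rw [hεdef, conjTranspose_sum]
    refine Finset.sum_congr rfl fun j _ => ?_
    rw [conjTranspose_mul, conjTranspose_mul, hhH, (hPh j).eq, ← mul_assoc]
  have hεPSD : ε.PosSemidef := by
    rw [hεdef]
    refine Finset.sum_induction _ _ (fun A B hA hB => hA.add hB) Matrix.PosSemidef.zero
      fun j _ => ?_
    have := hh.conjTranspose_mul_mul_same (P j)
    rwa [(hPh j).eq] at this
  have hεPi : ∀ j, ε * P j = P j * h * P j := fun j => eps_mul_P P hPi hPo h j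
  have hPiε : ∀ j, P j * ε = P j * h * P j := fun j => P_mul_eps P hPi hPo h j
  have hPcommε : ∀ j, ε * P j = P j * ε := fun j => by rw [hεPi, hPiε]
  -- spectral data for ε
  set U : Matrix (Fin N) (Fin N) ℂ := (hεH.eigenvectorUnitary : Matrix (Fin N) (Fin N) ℂ) with hUdef
  set μ : Fin N → ℝ := hεH.eigenvalues with hμdef
  have hUU : star U * U = 1 := mem_unitaryGroup_iff'.mp hεH.eigenvectorUnitary.2
  have hUU' : U * star U = 1 := mem_unitaryGroup_iff.mp hεH.eigenvectorUnitary.2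
  have hspec : ε = U * diagonal (RCLike.ofReal ∘ μ) * star U := hεH.spectral_theorem
  have hofr : ∀ r : ℝ, (RCLike.ofReal r : ℂ) = (r : ℂ) := fun r => rfl
  set F : ℝ → Matrix (Fin N) (Fin N) ℂ :=
    fun s => U * diagonal (fun k => if μ k = s then 1 else 0) * star U with hFdef
  set S : Finset ℝ := Finset.image μ Finset.univ with hSdef
  have hdiagmul : ∀ d e : Fin N → ℂ,
      (U * diagonal d * star U) * (U * diagonal e * star U)
        = U * diagonal (fun k => d k * e k) * star U := by
    intro d e
    have h1 : star U * (U * (diagonal e * star U)) = diagonal e * star U := by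
      rw [← mul_assoc, hUU, one_mul]
    calc (U * diagonal d * star U) * (U * diagonal e * star U)
        = U * (diagonal d * (star U * (U * (diagonal e * star U)))) := by
          simp only [mul_assoc]
      _ = U * (diagonal d * (diagonal e * star U)) := by rw [h1]
      _ = U * ((diagonal d * diagonal e) * star U) := by rw [mul_assoc]
      _ = U * diagonal (fun k => d k * e k) * star U := by
          rw [diagonal_mul_diagonal, mul_assoc]
  have hFsum : ∑ s ∈ S, F s = 1 := by
    have hd1 : (∑ s ∈ S, diagonal (fun k' => if μ k' = s then (1:ℂ) else 0)) = 1 := by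
      ext j k
      rw [Matrix.sum_apply]
      by_cases hjk : j = k
      · subst hjk
        simp only [diagonal_apply_eq]
        rw [Finset.sum_ite_eq]
        simp [hSdef]
      · simp [diagonal_apply_ne _ hjk, Matrix.one_apply_ne hjk]
    have e : ∑ s ∈ S, F s
        = U * (∑ s ∈ S, diagonal (fun k' => if μ k' = s then (1:ℂ) else 0)) * star U := by
      rw [Finset.mul_sum, Finset.sum_mul]
    rw [e, hd1, mul_one, hUU']
  have hεF : ∀ s : ℝ, ε * F s = (s : ℂ) • F s := by
    intro s
    simp only [hFdef]
    rw [hspec, hdiagmul]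
    have e1 : (fun k => (RCLike.ofReal ∘ μ) k * if μ k = s then (1:ℂ) else 0)
        = fun k => (s:ℂ) * if μ k = s then (1:ℂ) else 0 := by
      funext k
      by_cases hk : μ k = s <;> simp [hk, mul_comm]
    rw [e1]
    have e2 : diagonal (fun k => (s:ℂ) * if μ k = s then (1:ℂ) else 0)
        = (s:ℂ) • diagonal (fun k => if μ k = s then (1:ℂ) else 0) := by
      rw [← diagonal_smul]
      rfl
    rw [e2, Matrix.mul_smul, Matrix.smul_mul]
  have hFε : ∀ s : ℝ, F s * ε = (s : ℂ) • F s := by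
    intro s
    simp only [hFdef]
    rw [hspec, hdiagmul]
    have e1 : (fun k => (if μ k = s then (1:ℂ) else 0) * (RCLike.ofReal ∘ μ) k)
        = fun k => (s:ℂ) * if μ k = s then (1:ℂ) else 0 := by
      funext k
      by_cases hk : μ k = s <;> simp [hk, mul_comm]
    rw [e1]
    have e2 : diagonal (fun k => (s:ℂ) * if μ k = s then (1:ℂ) else 0)
        = (s:ℂ) • diagonal (fun k => if μ k = s then (1:ℂ) else 0) := by
      rw [← diagonal_smul]
      rfl
    rw [e2, Matrix.mul_smul, Matrix.smul_mul]
  have hFF : ∀ s : ℝ, F s * F s = F s := by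
    intro s
    simp only [hFdef]
    rw [hdiagmul]
    have e1 : (fun k => (if μ k = s then (1:ℂ) else 0) * if μ k = s then (1:ℂ) else 0)
        = fun k => if μ k = s then (1:ℂ) else 0 := by
      funext k
      by_cases hk : μ k = s <;> simp [hk]
    rw [e1]
  have hFForth : ∀ s t : ℝ, s ≠ t → F s * F t = 0 := by
    intro s t hst
    simp only [hFdef]
    rw [hdiagmul]
    have e1 : (fun k => (if μ k = s then (1:ℂ) else 0) * if μ k = t then (1:ℂ) else 0)
        = fun _ => (0:ℂ) := by
      funext k
      by_cases hk : μ k = s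
      · have hkt : μ k ≠ t := by rw [hk]; exact hst
        simp [hk, hkt, hst]
      · simp [hk]
    rw [e1, diagonal_zero, mul_zero, zero_mul]
  have hFH : ∀ s : ℝ, (F s)ᴴ = F s := by
    intro s
    simp only [hFdef]
    rw [conjTranspose_mul, conjTranspose_mul, diagonal_conjTranspose]
    rw [star_eq_conjTranspose U, conjTranspose_conjTranspose]
    have e1 : (star fun k => if μ k = s then (1:ℂ) else 0)
        = fun k => if μ k = s then (1:ℂ) else 0 := by
      funext k
      by_cases hk : μ k = s <;> simp [hk]
    rw [e1, mul_assoc, ← star_eq_conjTranspose U]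
  have hcross : ∀ B : Matrix (Fin N) (Fin N) ℂ, ε * B = B * ε →
      ∀ s t : ℝ, s ≠ t → F s * B * F t = 0 := by
    intro B hB s t hst
    have e1 : (s : ℂ) • (F s * B * F t) = (t : ℂ) • (F s * B * F t) := by
      calc (s : ℂ) • (F s * B * F t) = ((s:ℂ) • F s) * B * F t := by
            rw [Matrix.smul_mul, Matrix.smul_mul]
        _ = (F s * ε) * B * F t := by rw [hFε]
        _ = F s * (ε * B) * F t := by rw [mul_assoc (F s)]
        _ = F s * (B * ε) * F t := by rw [hB]
        _ = F s * B * (ε * F t) := by rw [← mul_assoc (F s) B ε, mul_assoc (F s * B) ε (F t)]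
        _ = F s * B * ((t:ℂ) • F t) := by rw [hεF]
        _ = (t : ℂ) • (F s * B * F t) := by rw [Matrix.mul_smul]
    have e2 : ((s : ℂ) - (t : ℂ)) • (F s * B * F t) = 0 := by
      rw [sub_smul, e1, sub_self]
    rcases smul_eq_zero.mp e2 with h0 | h0
    · exact absurd (by exact_mod_cast sub_eq_zero.mp h0) hst
    · exact h0
  have hFcomm : ∀ B : Matrix (Fin N) (Fin N) ℂ, ε * B = B * ε →
      ∀ s ∈ S, F s * B = B * F s := by
    intro B hB s hs
    have h1 : F s * B = F s * B * F s := by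
      calc F s * B = (F s * B) * 1 := (mul_one _).symm
        _ = (F s * B) * ∑ t ∈ S, F t := by rw [hFsum]
        _ = ∑ t ∈ S, F s * B * F t := by rw [Finset.mul_sum]
        _ = F s * B * F s :=
            Finset.sum_eq_single_of_mem s hs fun t _ hts => hcross B hB s t (Ne.symm hts)
    have h2 : B * F s = F s * B * F s := by
      calc B * F s = 1 * (B * F s) := (one_mul _).symm
        _ = (∑ t ∈ S, F t) * (B * F s) := by rw [hFsum]
        _ = ∑ t ∈ S, F t * (B * F s) := by rw [Finset.sum_mul]
        _ = F s * (B * F s) :=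
            Finset.sum_eq_single_of_mem s hs fun t _ hts => by
              rw [← mul_assoc]; exact hcross B hB t s hts
        _ = F s * B * F s := by rw [← mul_assoc]
    rw [h1, h2]
  -- Hermitian part
  have hQH : (h * ε - h * P i * h).IsHermitian := by
    have h1 : (h * ε)ᴴ = h * ε := by
      rw [conjTranspose_mul, hεH.eq, hhH]; exact hcomm
    have h2 : (h * P i * h)ᴴ = h * P i * h := by
      rw [conjTranspose_mul, conjTranspose_mul, hhH, (hPh i).eq]
      exact (mul_assoc h (P i) h).symm
    exact IsHermitian.sub h1 h2
  refine PosSemidef.of_dotProduct_mulVec_nonneg hQH fun x => ?_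
  set Q := h * ε - h * P i * h with hQdef
  have hcrossQ : ∀ s t : ℝ, s ∈ S → t ∈ S → s ≠ t → F s * Q * F t = 0 := by
    intro s t hsS htS hst
    rw [hQdef, mul_sub, sub_mul]
    have hterm1 : F s * (h * ε) * F t = 0 := by
      have e : F s * (h * ε) * F t = (F s * h) * (ε * F t) := by simp only [mul_assoc]
      rw [e, hεF, Matrix.mul_smul, hFcomm h hcomm s hsS, mul_assoc, hFForth s t hst,
        mul_zero, smul_zero]
    have hterm2 : F s * (h * P i * h) * F t = 0 := by
      have e : F s * (h * P i * h) * F t = (F s * h) * P i * (h * F t) := by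
        simp only [mul_assoc]
      rw [e, hFcomm h hcomm s hsS, ← hFcomm h hcomm t htS]
      have e2 : h * F s * P i * (F t * h) = h * (F s * P i * F t) * h := by
        simp only [mul_assoc]
      rw [e2, hcross (P i) (hPcommε i) s t hst, mul_zero, zero_mul]
    rw [hterm1, hterm2, sub_zero]
  have hQdecomp : Q = ∑ s ∈ S, F s * Q * F s := by
    have h0 : Q = ∑ s ∈ S, Q * F s := by
      calc Q = Q * 1 := (mul_one _).symm
        _ = Q * ∑ t ∈ S, F t := by rw [hFsum]
        _ = ∑ t ∈ S, Q * F t := by rw [Finset.mul_sum]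
    refine h0.trans (Finset.sum_congr rfl fun s hs => ?_)
    calc Q * F s = 1 * (Q * F s) := (one_mul _).symm
      _ = (∑ t ∈ S, F t) * (Q * F s) := by rw [hFsum]
      _ = ∑ t ∈ S, F t * (Q * F s) := by rw [Finset.sum_mul]
      _ = F s * (Q * F s) :=
          Finset.sum_eq_single_of_mem s hs fun t htS hts => by
            rw [← mul_assoc]; exact hcrossQ t s htS hs hts
      _ = F s * Q * F s := by rw [← mul_assoc]
  have hterm : ∀ s, star x ⬝ᵥ ((F s * Q * F s) *ᵥ x)
      = star (F s *ᵥ x) ⬝ᵥ (Q *ᵥ (F s *ᵥ x)) := by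
    intro s
    rw [← mulVec_mulVec, ← mulVec_mulVec, dotProduct_mulVec, ← hFH s, ← star_mulVec, hFH s]
  have hsum_eq : star x ⬝ᵥ (Q *ᵥ x) = ∑ s ∈ S, star (F s *ᵥ x) ⬝ᵥ (Q *ᵥ (F s *ᵥ x)) := by
    conv_lhs => rw [hQdecomp]
    rw [dp_sum]
    exact Finset.sum_congr rfl fun s _ => hterm s
  rw [hsum_eq]
  refine Finset.sum_nonneg fun s hs => ?_
  -- per-block analysis
  obtain ⟨k, _, hk⟩ := Finset.mem_image.mp hs
  have hs0 : (0:ℝ) ≤ s := hk ▸ hεPSD.eigenvalues_nonneg k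
  set xs := F s *ᵥ x with hxs
  set y := P i *ᵥ (h *ᵥ xs) with hy
  have hyP : P i *ᵥ y = y := by
    rw [hy, mulVec_mulVec, hPi i]

  have hy' : y = (P i * h) *ᵥ xs := by rw [hy, mulVec_mulVec]
  have moveP : ∀ (w z : Fin N → ℂ), star w ⬝ᵥ (P i *ᵥ z) = star (P i *ᵥ w) ⬝ᵥ z := by
    intro w z
    rw [star_mulVec, (hPh i).eq, dotProduct_mulVec]
  set α := star xs ⬝ᵥ (h *ᵥ xs) with hα
  set c := star y ⬝ᵥ y with hc
  have hPh' : (P i * h)ᴴ = h * P i := by rw [conjTranspose_mul, hhH, (hPh i).eq]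
  have hfact : h * P i * h = (P i * h)ᴴ * (P i * h) := by
    rw [hPh']
    conv_rhs => rw [← mul_assoc, mul_assoc h (P i) (P i), hPi i]
  have hQx : star xs ⬝ᵥ (Q *ᵥ xs) = (s:ℂ) * α - c := by
    rw [hQdef, sub_mulVec, dotProduct_sub]
    congr 1
    · have e1 : (h * ε) *ᵥ xs = (s:ℂ) • (h *ᵥ xs) := by
        rw [hxs, mulVec_mulVec, mul_assoc, hεF, Matrix.mul_smul, smul_mulVec,
          ← mulVec_mulVec]
      rw [e1, dotProduct_smul, smul_eq_mul, ← hα]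
    · rw [hfact, ← mulVec_mulVec, dotProduct_mulVec, ← star_mulVec, ← hy', ← hc]
  have hα0 : 0 ≤ α := hα ▸ hh.dotProduct_mulVec_nonneg xs
  have hc0 : 0 ≤ c := hc ▸ dotProduct_star_self_nonneg y
  obtain ⟨g, hgH, hgg⟩ := psd_sqrt_ex hh
  set u := g *ᵥ y with hu
  set v := g *ᵥ xs with hv
  have huu : star u ⬝ᵥ u = star y ⬝ᵥ (h *ᵥ y) := by
    rw [hu, star_mulVec, hgH, ← dotProduct_mulVec, mulVec_mulVec, hgg]
  have hvv : star v ⬝ᵥ v = α := by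
    rw [hv, star_mulVec, hgH, ← dotProduct_mulVec, mulVec_mulVec, hgg, ← hα]
  have huv : star u ⬝ᵥ v = star y ⬝ᵥ (h *ᵥ xs) := by
    rw [hu, hv, star_mulVec, hgH, ← dotProduct_mulVec, mulVec_mulVec, hgg]
  have hyeq : star y ⬝ᵥ y = star y ⬝ᵥ (h *ᵥ xs) := by
    nth_rewrite 2 [hy]
    rw [moveP, hyP]
  have hcc : c = star u ⬝ᵥ v := by rw [huv, hc]; exact hyeq
  have hyx : y = (P i * h * F s) *ᵥ x := by
    rw [hy, hxs, mulVec_mulVec, mulVec_mulVec]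
  have hFy : F s *ᵥ y = y := by
    have e : F s * (P i * h * F s) = P i * h * F s := by
      simp only [← mul_assoc]
      rw [hFcomm (P i) (hPcommε i) s hs, mul_assoc (P i) (F s) h,
        hFcomm h hcomm s hs, ← mul_assoc (P i) h (F s), mul_assoc (P i * h) (F s) (F s), hFF s]
    calc F s *ᵥ y = (F s * (P i * h * F s)) *ᵥ x := by rw [hyx, mulVec_mulVec]
      _ = (P i * h * F s) *ᵥ x := by rw [e]
      _ = y := hyx.symm
  have hεy : ε *ᵥ y = (s:ℂ) • y := by
    calc ε *ᵥ y = ε *ᵥ (F s *ᵥ y) := by rw [hFy]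
      _ = (ε * F s) *ᵥ y := by rw [mulVec_mulVec]
      _ = ((s:ℂ) • F s) *ᵥ y := by rw [hεF]
      _ = (s:ℂ) • (F s *ᵥ y) := by rw [smul_mulVec]
      _ = (s:ℂ) • y := by rw [hFy]
  have hβ : star y ⬝ᵥ (h *ᵥ y) = (s:ℂ) * c := by
    rw [← hyP]
    rw [star_mulVec, (hPh i).eq, ← dotProduct_mulVec, mulVec_mulVec, mulVec_mulVec,
      ← hεPi i, ← mulVec_mulVec, hyP, hεy, dotProduct_smul, smul_eq_mul, ← hc]
  have hcs := dp_cs u v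
  rw [← hcc, huu, hβ, hvv] at hcs
  have hc_im : c.im = 0 := ((Complex.nonneg_iff.mp hc0).2).symm
  have hα_im : α.im = 0 := ((Complex.nonneg_iff.mp hα0).2).symm
  have hc_re : 0 ≤ c.re := (Complex.nonneg_iff.mp hc0).1
  have hα_re : 0 ≤ α.re := (Complex.nonneg_iff.mp hα0).1
  have hαre : α = ((α.re : ℝ) : ℂ) := Complex.ext (Complex.ofReal_re _).symm
    (by rw [Complex.ofReal_im, hα_im])
  have hcre : c = ((c.re : ℝ) : ℂ) := Complex.ext (Complex.ofReal_re _).symm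
    (by rw [Complex.ofReal_im, hc_im])
  have hnormsq : ‖c‖ ^ 2 = c.re ^ 2 := by
    rw [Complex.sq_norm, Complex.normSq_apply, hc_im]
    ring
  have hscre : ((s:ℂ) * c).re = s * c.re := by
    rw [Complex.mul_re, Complex.ofReal_re, Complex.ofReal_im, hc_im]
    ring
  rw [hnormsq, hscre] at hcs
  have hineq : c.re ≤ s * α.re := by
    rcases eq_or_lt_of_le hc_re with h0 | h0
    · rw [← h0]; exact mul_nonneg hs0 hα_re
    · nlinarith
  rw [hQx, hαre, hcre,
    show (s:ℂ) * ((α.re : ℝ) : ℂ) - ((c.re : ℝ) : ℂ) = (((s * α.re - c.re : ℝ)) : ℂ) from by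
      push_cast; ring]
  rw [Complex.zero_le_real]
  linarith


lemma tr_sq_eq (P : Fin m → Matrix (Fin N) (Fin N) ℂ)
    (hPi : ∀ i, P i * P i = P i) (h : Matrix (Fin N) (Fin N) ℂ) (i : Fin m) :
    (P i * h * P i * (P i * h * P i)).trace = (h * P i * h * P i).trace := by
  have e : P i * h * P i * (P i * h * P i) = P i * (h * (P i * (h * P i))) := by
    simp only [mul_assoc]
    rw [← mul_assoc (P i) (P i) (h * P i), hPi i]
  rw [e, trace_mul_comm]
  have e2 : h * (P i * (h * P i)) * P i = h * P i * h * P i := by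
    simp only [mul_assoc]
    rw [hPi i]
  rw [e2]

lemma key_greatest (P : Fin m → Matrix (Fin N) (Fin N) ℂ)
    (hPh : ∀ i, (P i).IsHermitian) (hPi : ∀ i, P i * P i = P i)
    (hPo : ∀ i j, i ≠ j → P i * P j = 0) (hPsum : ∑ i, P i = 1)
    (h : Matrix (Fin N) (Fin N) ℂ) (hh : h.PosSemidef)
    (hcomm : (∑ i, P i * h * P i) * h = h * (∑ i, P i * h * P i))
    (V : ℝ) (hV : V = ∑ i, ((P i * h * P i * (P i * h * P i)).trace).re) :
    IsGreatest {t : ℝ | ∃ δ : Fin m → Matrix (Fin N) (Fin N) ℂ,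
        (∀ i, (δ i).PosSemidef) ∧ ∑ i, δ i = 1 ∧
        t = ∑ i, ((h * P i * h * δ i).trace).re} V := by
  constructor
  · refine ⟨P, fun i => ?_, hPsum, ?_⟩
    · have hps := (Matrix.PosSemidef.one (n := Fin N) (R := ℂ)).conjTranspose_mul_mul_same (P i)
      rwa [(hPh i).eq, mul_one, hPi i] at hps
    · rw [hV]
      exact Finset.sum_congr rfl fun i _ => by rw [tr_sq_eq P hPi h i]
  · rintro t ⟨δ, hδpsd, hδsum, rfl⟩
    rw [hV]
    have hlam := key_psd P hPh hPi hPo hPsum h hh hcomm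
    have step1 : ∀ i : Fin m, ((h * P i * h * δ i).trace).re
        ≤ ((h * (∑ j, P j * h * P j) * δ i).trace).re := by
      intro i
      have hnn := trace_mul_re_nonneg (hlam i) (hδpsd i)
      rw [sub_mul, trace_sub, Complex.sub_re] at hnn
      linarith
    calc ∑ i, ((h * P i * h * δ i).trace).re
        ≤ ∑ i, ((h * (∑ j, P j * h * P j) * δ i).trace).re :=
          Finset.sum_le_sum fun i _ => step1 i
      _ = ((h * (∑ j, P j * h * P j) * ∑ i, δ i).trace).re := by
          rw [← Complex.re_sum, ← Matrix.trace_sum, ← Finset.mul_sum]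
      _ = ((h * (∑ j, P j * h * P j)).trace).re := by rw [hδsum, mul_one]
      _ = ∑ i, ((P i * h * P i * (P i * h * P i)).trace).re := by
          rw [Finset.mul_sum, Matrix.trace_sum, Complex.re_sum]
          refine Finset.sum_congr rfl fun j _ => ?_
          have e : h * (P j * h * P j) = h * P j * h * P j := by simp only [mul_assoc]
          rw [e, tr_sq_eq P hPi h j]

end Core

section Pure

variable {m' : ℕ}

lemma P'_herm (i : Fin m') : (Matrix.single i i (1:ℂ)).IsHermitian := by
  show _ᴴ = _
  ext j k
  simp only [Matrix.conjTranspose_apply, Matrix.single, Matrix.of_apply]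
  by_cases h1 : i = j <;> by_cases h2 : i = k <;> simp [h1, h2]

lemma P'_idem (i : Fin m') :
    Matrix.single i i (1:ℂ) * Matrix.single i i 1
      = Matrix.single i i 1 := by
  rw [Matrix.single_mul_single_same, one_mul]

lemma P'_orth (i j : Fin m') (hij : i ≠ j) :
    Matrix.single i i (1:ℂ) * Matrix.single j j 1 = 0 :=
  Matrix.single_mul_single_of_ne (c := (1:ℂ)) i i j hij 1

lemma P'_sum : ∑ i : Fin m', Matrix.single i i (1:ℂ) = 1 := by
  ext j k
  rw [Matrix.sum_apply]
  by_cases hjk : j = k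
  · subst hjk
    rw [Finset.sum_eq_single j (fun i _ hij => by
        simp only [Matrix.single, Matrix.of_apply]
        rw [if_neg]; rintro ⟨rfl, -⟩; exact hij rfl)
      (fun hj => absurd (Finset.mem_univ j) hj)]
    simp [Matrix.single, Matrix.one_apply_eq]
  · rw [Finset.sum_eq_zero fun i _ => by
      simp only [Matrix.single, Matrix.of_apply]
      rw [if_neg]; rintro ⟨rfl, rfl⟩; exact hjk rfl]
    rw [Matrix.one_apply_ne hjk]

lemma P'_single (h' : Matrix (Fin m') (Fin m') ℂ) (a : ℝ) (hdiag : ∀ i, h' i i = (a:ℂ))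
    (i : Fin m') :
    Matrix.single i i (1:ℂ) * h' * Matrix.single i i 1
      = Matrix.single i i ((a:ℝ):ℂ) := by
  ext j k
  by_cases h1 : i = j
  · subst h1
    by_cases h2 : i = k
    · subst h2
      simp [hdiag]
    · simp [Ne.symm h2, h2]
  · simp [mul_assoc, Ne.symm h1, h1]

lemma P'_eps (h' : Matrix (Fin m') (Fin m') ℂ) (a : ℝ) (hdiag : ∀ i, h' i i = (a:ℂ)) :
    ∑ i : Fin m', Matrix.single i i (1:ℂ) * h' * Matrix.single i i 1
      = (a:ℂ) • 1 := by
  rw [Finset.sum_congr rfl fun i _ => P'_single h' a hdiag i]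
  rw [show ∑ i : Fin m', Matrix.single i i ((a:ℝ):ℂ)
      = (a:ℂ) • ∑ i : Fin m', Matrix.single i i (1:ℂ) from by
    rw [Finset.smul_sum]
    exact Finset.sum_congr rfl fun i _ => by rw [Matrix.smul_single, smul_eq_mul, mul_one]]
  rw [P'_sum]

lemma P'_comm (h' : Matrix (Fin m') (Fin m') ℂ) (a : ℝ) (hdiag : ∀ i, h' i i = (a:ℂ)) :
    (∑ i : Fin m', Matrix.single i i (1:ℂ) * h' * Matrix.single i i 1) * h'
      = h' * ∑ i : Fin m', Matrix.single i i (1:ℂ) * h' * Matrix.single i i 1 := by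
  rw [P'_eps h' a hdiag, Matrix.smul_mul, one_mul, Matrix.mul_smul, mul_one]

end Pure

/-- The equidiagonal (commutative) case of optimal identification: if the block-diagonal
part `ϵ(h) = ∑ᵢ Pᵢ h Pᵢ` of `h = σ^{1/2}` commutes with `h`, then the optimality
conditions are satisfied with `μᵢ = (hᵢᵢ)²` (i.e. `λ λ = h ϵ(h)² h`), the optimal
decision operators in signal space are `δᵢ = 1ᵢ = Pᵢ`, and the quality of optimal
identification is `∑ᵢ Tr (hᵢᵢ)²`.  In particular, for `m'` pure patterns `ψᵢ` whose Gram
matrix `σ'` has a square root `h'` with constant diagonal `h'ᵢᵢ = a`, the maximal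
intensity of optimally separated signals is `m' a² = (Tr σ'^{1/2})² / m'`. -/
theorem optimal_identification_equidiagonal {N m : ℕ}
    {V : Type*} [NormedAddCommGroup V] [InnerProductSpace ℂ V]
    (P : Fin m → Matrix (Fin N) (Fin N) ℂ)
    (hPh : ∀ i, (P i).IsHermitian) (hPi : ∀ i, P i * P i = P i)
    (hPo : ∀ i j, i ≠ j → P i * P j = 0) (hPsum : ∑ i, P i = 1)
    (σ h : Matrix (Fin N) (Fin N) ℂ) (hσ : σ.PosSemidef)
    (hh : h.PosSemidef) (hh2 : h * h = σ)
    (hcomm : (∑ i, P i * h * P i) * h = h * (∑ i, P i * h * P i)) :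
    (∃ lam : Matrix (Fin N) (Fin N) ℂ,
      lam * lam = h * ((∑ i, P i * h * P i) * (∑ i, P i * h * P i)) * h ∧
      (∀ i, (lam - h * P i * h).PosSemidef) ∧
      (∀ i, (lam - h * P i * h) * P i = 0)) ∧
    IsGreatest {t : ℝ | ∃ δ : Fin m → Matrix (Fin N) (Fin N) ℂ,
        (∀ i, (δ i).PosSemidef) ∧ ∑ i, δ i = 1 ∧
        t = ∑ i, ((h * P i * h * δ i).trace).re}
      (∑ i, ((P i * h * P i * (P i * h * P i)).trace).re) ∧
    (∀ (m' : ℕ) (ψ : Fin m' → V) (σ' h' : Matrix (Fin m') (Fin m') ℂ) (a : ℝ),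
      (∀ i j, σ' i j = (inner ℂ (ψ i) (ψ j) : ℂ)) →
      h'.PosSemidef → h' * h' = σ' → (∀ i, h' i i = (a : ℂ)) →
      (IsGreatest {t : ℝ | ∃ δ : Fin m' → Matrix (Fin m') (Fin m') ℂ,
          (∀ i, (δ i).PosSemidef) ∧ ∑ i, δ i = 1 ∧
          t = ∑ i, ((h' * Matrix.single i i 1 * h' * δ i).trace).re}
        ((m' : ℝ) * a ^ 2) ∧
        (m' : ℝ) * a ^ 2 = ((h'.trace).re) ^ 2 / (m' : ℝ))) := by
  refine ⟨⟨h * (∑ i, P i * h * P i), ?_, fun i => key_psd P hPh hPi hPo hPsum h hh hcomm i, ?_⟩,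
    key_greatest P hPh hPi hPo hPsum h hh hcomm _ rfl, ?_⟩
  · rw [mul_assoc h (∑ i, P i * h * P i) (h * ∑ i, P i * h * P i),
      mul_assoc h ((∑ i, P i * h * P i) * ∑ i, P i * h * P i) h,
      mul_assoc (∑ i, P i * h * P i) (∑ i, P i * h * P i) h, hcomm]
  · intro i
    rw [sub_mul]
    have e1 : (h * (∑ j, P j * h * P j)) * P i = h * P i * h * P i := by
      rw [mul_assoc, eps_mul_P P hPi hPo h i]
      simp only [mul_assoc]
    rw [e1, sub_self]
  · intro m' ψ σ' h' a hGram hh' hh'2 hdiag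
    constructor
    · refine key_greatest (fun i => Matrix.single i i 1) (fun i => P'_herm i)
        (fun i => P'_idem i) (fun i j hij => P'_orth i j hij) P'_sum h' hh'
        (P'_comm h' a hdiag) ((m' : ℝ) * a ^ 2) ?_
      have e : ∀ i : Fin m',
          ((Matrix.single i i (1:ℂ) * h' * Matrix.single i i 1 *
            (Matrix.single i i 1 * h' * Matrix.single i i 1)).trace).re
            = a ^ 2 := by
        intro i
        rw [P'_single h' a hdiag i, Matrix.single_mul_single_same,
          Matrix.trace_single_eq_same, ← Complex.ofReal_mul, Complex.ofReal_re]
        ring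
      rw [Finset.sum_congr rfl fun i _ => e i, Finset.sum_const, Finset.card_univ,
        Fintype.card_fin, nsmul_eq_mul]
    · have htr : h'.trace.re = (m' : ℝ) * a := by
        have e : h'.trace = (m' : ℂ) * (a : ℂ) := by
          calc h'.trace = ∑ i : Fin m', h' i i := rfl
            _ = ∑ _i : Fin m', (a : ℂ) := Finset.sum_congr rfl fun i _ => hdiag i
            _ = (m' : ℂ) * (a : ℂ) := by
                rw [Finset.sum_const, Finset.card_univ, Fintype.card_fin, nsmul_eq_mul]
        rw [e]
        simp [Complex.mul_re]
      rw [htr]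
      rcases Nat.eq_zero_or_pos m' with h0 | h0
      · simp [h0]
      · have hm : (m' : ℝ) ≠ 0 := Nat.cast_ne_zero.mpr h0.ne'
        field_simp
end

section
/- Let S₁ and S₂ be positive semidefinite Hermitian operators on a finite-dimensional complex inner product space H and E an orthogonal projection with S₁E = S₁ and S₂E = S₂. Then the optimal two-pattern identification value satisfies sup{Tr(S₁D₁) + Tr(S₂D₂) : D₁ ≥ 0, D₂ ≥ 0, D₁ + D₂ ≤ E} = Tr(S₂E) + Tr((S₁ − S₂)₊), and the supremum is attained at D₁° = E₊ (the orthogonal projection onto the span of eigenvectors of C = S₁ − S₂ with positive eigenvalues) and D₂° = E − D₁°. -/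
open Matrix
open scoped ComplexOrder

noncomputable section

section Helpers
variable {n : ℕ}

private lemma vmv_mulVec (w v x : Fin n → ℂ) :
    Matrix.vecMulVec w v *ᵥ x = (v ⬝ᵥ x) • w := by
  ext i
  simp only [Matrix.mulVec, Matrix.vecMulVec_apply, dotProduct, Pi.smul_apply,
    smul_eq_mul, Finset.sum_mul]
  exact Finset.sum_congr rfl fun j _ => by ring

private lemma trace_mul_vmv (A : Matrix (Fin n) (Fin n) ℂ) (w v : Fin n → ℂ) :
    (A * Matrix.vecMulVec w v).trace = v ⬝ᵥ (A *ᵥ w) := by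
  simp only [Matrix.trace, Matrix.diag, Matrix.mul_apply, Matrix.vecMulVec_apply,
    dotProduct, Matrix.mulVec, Finset.mul_sum]
  exact Finset.sum_congr rfl fun i _ => Finset.sum_congr rfl fun j _ => by ring

private lemma mul_vmv (A : Matrix (Fin n) (Fin n) ℂ) (w v : Fin n → ℂ) :
    A * Matrix.vecMulVec w v = Matrix.vecMulVec (A *ᵥ w) v := by
  ext i j
  simp only [Matrix.mul_apply, Matrix.vecMulVec_apply, Matrix.mulVec, dotProduct,
    Finset.sum_mul]
  exact Finset.sum_congr rfl fun k _ => by ring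

private lemma vmv_conjT (x : Fin n → ℂ) :
    (Matrix.vecMulVec x (star x))ᴴ = Matrix.vecMulVec x (star x) := by
  ext i j
  simp [Matrix.conjTranspose_apply, Matrix.vecMulVec_apply, mul_comm]

private lemma vmv_psd (x : Fin n → ℂ) : (Matrix.vecMulVec x (star x)).PosSemidef := by
  refine Matrix.PosSemidef.of_dotProduct_mulVec_nonneg (vmv_conjT x) fun y => ?_
  rw [vmv_mulVec, dotProduct_smul]
  have h : star y ⬝ᵥ x = star (star x ⬝ᵥ y) := by
    simp [dotProduct, mul_comm]
  rw [smul_eq_mul, h]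
  exact mul_star_self_nonneg _

private lemma trace_psd_nonneg {A : Matrix (Fin n) (Fin n) ℂ} (hA : A.PosSemidef) :
    (0:ℂ) ≤ A.trace := by
  rw [Matrix.trace]
  refine Finset.sum_nonneg fun i _ => ?_
  have := hA.dotProduct_mulVec_nonneg (Pi.single i 1)
  simpa [Matrix.mulVec_single, dotProduct, Pi.single_apply] using this

open scoped MatrixOrder in
private lemma trace_mul_psd_nonneg {A B : Matrix (Fin n) (Fin n) ℂ}
    (hA : A.PosSemidef) (hB : B.PosSemidef) : (0:ℂ) ≤ (A * B).trace := by
  rw [← CFC.sqrt_mul_sqrt_self A hA.nonneg, mul_assoc, Matrix.trace_mul_comm]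
  have hs := (CFC.sqrt_nonneg A).posSemidef
  have : CFC.sqrt A * B * CFC.sqrt A = (CFC.sqrt A)ᴴ * B * CFC.sqrt A := by rw [hs.1]
  rw [this]
  exact trace_psd_nonneg (hB.conjTranspose_mul_mul_same _)

private lemma vmv_mul_vmv (a b c d : Fin n → ℂ) :
    Matrix.vecMulVec a b * Matrix.vecMulVec c d = (b ⬝ᵥ c) • Matrix.vecMulVec a d := by
  ext i j
  simp only [Matrix.mul_apply, Matrix.vecMulVec_apply, dotProduct, Matrix.smul_apply,
    smul_eq_mul, Finset.sum_mul]
  exact Finset.sum_congr rfl fun k _ => by ring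

private lemma trace_vmv (w v : Fin n → ℂ) :
    (Matrix.vecMulVec w v).trace = w ⬝ᵥ v := by
  simp [Matrix.trace, Matrix.diag, Matrix.vecMulVec_apply, dotProduct]

end Helpers

/-- Optimal identification of two mixed wave patterns:
`sup {Tr (S₁D₁) + Tr (S₂D₂) : D₁, D₂ ≥ 0, D₁ + D₂ ≤ E} = Tr (S₂E) + Tr ((S₁ − S₂)₊)`,
attained at `D₁ = E₊`, `D₂ = E − E₊`. -/
theorem two_pattern_identification {n : ℕ}
    (S₁ S₂ E : Matrix (Fin n) (Fin n) ℂ)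
    (hS₁ : S₁.PosSemidef) (hS₂ : S₂.PosSemidef)
    (hE : E.IsHermitian) (hEproj : E * E = E)
    (h1E : S₁ * E = S₁) (h2E : S₂ * E = S₂)
    (χ : Fin n → (Fin n → ℂ)) (κ : Fin n → ℝ)
    (hON : ∀ i j, star (χ i) ⬝ᵥ χ j = if i = j then 1 else 0)
    (hspec : S₁ - S₂ = ∑ i, (κ i : ℂ) • Matrix.vecMulVec (χ i) (star (χ i))) :
    IsGreatest {t : ℝ | ∃ D₁ D₂ : Matrix (Fin n) (Fin n) ℂ,
        D₁.PosSemidef ∧ D₂.PosSemidef ∧ (E - (D₁ + D₂)).PosSemidef ∧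
        t = ((S₁ * D₁).trace).re + ((S₂ * D₂).trace).re}
      (((S₂ * E).trace).re + ((posPartM χ κ).trace).re) ∧
    (posProjM χ κ).PosSemidef ∧ (E - posProjM χ κ).PosSemidef ∧
    ((S₁ * posProjM χ κ).trace).re + ((S₂ * (E - posProjM χ κ)).trace).re =
      ((S₂ * E).trace).re + ((posPartM χ κ).trace).re := by
  set P := posProjM χ κ with hP
  set Q := posPartM χ κ with hQ
  -- basic facts about C = S₁ - S₂
  have hCherm : (S₁ - S₂)ᴴ = S₁ - S₂ := by
    rw [Matrix.conjTranspose_sub, hS₁.1, hS₂.1]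
  have hCE : (S₁ - S₂) * E = S₁ - S₂ := by rw [Matrix.sub_mul, h1E, h2E]
  have hEC : E * (S₁ - S₂) = S₁ - S₂ := by
    have h1 : (((S₁ - S₂)) * E)ᴴ = E * (S₁ - S₂) := by
      rw [Matrix.conjTranspose_mul, hE.eq, hCherm]
    rw [← h1, hCE, hCherm]
  have hCv : ∀ j, (S₁ - S₂) *ᵥ χ j = (κ j : ℂ) • χ j := by
    intro j
    rw [hspec]
    rw [show (∑ i : Fin n, (κ i : ℂ) • Matrix.vecMulVec (χ i) (star (χ i))) *ᵥ χ j
        = ∑ i : Fin n, ((κ i : ℂ) • Matrix.vecMulVec (χ i) (star (χ i))) *ᵥ χ j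
      from map_sum (Matrix.mulVec.addMonoidHomLeft (χ j)) _ Finset.univ]
    simp only [Matrix.smul_mulVec, vmv_mulVec, hON]
    simp [ite_smul, smul_smul]
  have hEv : ∀ i, κ i ≠ 0 → E *ᵥ χ i = χ i := by
    intro i hi
    have h1 : E *ᵥ ((S₁ - S₂) *ᵥ χ i) = (S₁ - S₂) *ᵥ χ i := by
      rw [Matrix.mulVec_mulVec, hEC]
    rw [hCv, Matrix.mulVec_smul] at h1
    have hk : (κ i : ℂ) ≠ 0 := by exact_mod_cast hi
    exact smul_right_injective _ hk h1
  have hEP : E * P = P := by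
    rw [hP]; unfold posProjM
    rw [Finset.mul_sum]
    refine Finset.sum_congr rfl fun i hi => ?_
    rw [mul_vmv, hEv i (ne_of_gt (Finset.mem_filter.mp hi).2)]
  have hPherm : Pᴴ = P := by
    rw [hP]; unfold posProjM
    rw [Matrix.conjTranspose_sum]
    exact Finset.sum_congr rfl fun i _ => vmv_conjT (χ i)
  have hPP : P * P = P := by
    rw [hP]; unfold posProjM
    rw [Finset.sum_mul]
    refine Finset.sum_congr rfl fun i hi => ?_
    rw [Finset.mul_sum]
    have : ∀ j ∈ Finset.univ.filter (fun i => 0 < κ i),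
        Matrix.vecMulVec (χ i) (star (χ i)) * Matrix.vecMulVec (χ j) (star (χ j))
        = if i = j then Matrix.vecMulVec (χ i) (star (χ j)) else 0 := by
      intro j _
      rw [vmv_mul_vmv, hON]
      split <;> simp
    rw [Finset.sum_congr rfl this, Finset.sum_ite_eq, if_pos hi]
  have hPpsd : P.PosSemidef := by
    have h : P = Pᴴ * P := by rw [hPherm, hPP]
    rw [h]; exact Matrix.posSemidef_conjTranspose_mul_self P
  have hPE : P * E = P := by
    have h1 : (E * P)ᴴ = P * E := by rw [Matrix.conjTranspose_mul, hPherm, hE.eq]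
    rw [← h1, hEP, hPherm]
  have hEPpsd : (E - P).PosSemidef := by
    have hherm : (E - P)ᴴ = E - P := by rw [Matrix.conjTranspose_sub, hE.eq, hPherm]
    have hmul : (E - P) * (E - P) = E - P := by
      rw [Matrix.sub_mul, Matrix.mul_sub, Matrix.mul_sub, hEproj, hEP, hPE, hPP, sub_self,
        sub_zero]
    have h : E - P = (E - P)ᴴ * (E - P) := by rw [hherm, hmul]
    rw [h]; exact Matrix.posSemidef_conjTranspose_mul_self _
  have htrQ : Q.trace = ∑ i ∈ Finset.univ.filter (fun i => 0 < κ i), (κ i : ℂ) := by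
    rw [hQ]; unfold posPartM
    rw [Matrix.trace_sum]
    refine Finset.sum_congr rfl fun i _ => ?_
    rw [Matrix.trace_smul, trace_vmv, dotProduct_comm, hON, if_pos rfl]
    simp
  have htrCP : ((S₁ - S₂) * P).trace = Q.trace := by
    rw [htrQ, hP]; unfold posProjM
    rw [Finset.mul_sum, Matrix.trace_sum]
    refine Finset.sum_congr rfl fun i hi => ?_
    rw [trace_mul_vmv, hCv, dotProduct_smul, hON, if_pos rfl]
    simp
  have hvalC : (S₁ * P).trace + (S₂ * (E - P)).trace = (S₂ * E).trace + Q.trace := by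
    rw [Matrix.mul_sub, Matrix.trace_sub, ← htrCP, Matrix.sub_mul, Matrix.trace_sub]
    ring
  have hval : ((S₁ * P).trace).re + ((S₂ * (E - P)).trace).re
      = ((S₂ * E).trace).re + (Q.trace).re := by
    have := congrArg Complex.re hvalC
    simpa [Complex.add_re] using this
  have hub : ∀ (D₁ D₂ : Matrix (Fin n) (Fin n) ℂ), D₁.PosSemidef → D₂.PosSemidef →
      (E - (D₁ + D₂)).PosSemidef →
      ((S₁ * D₁).trace).re + ((S₂ * D₂).trace).re ≤ ((S₂ * E).trace).re + (Q.trace).re := by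
    intro D₁ D₂ hD₁ hD₂ hDE
    have hA : ((S₂ * D₁).trace).re + ((S₂ * D₂).trace).re ≤ ((S₂ * E).trace).re := by
      have h0 : (0:ℂ) ≤ (S₂ * (E - (D₁ + D₂))).trace := trace_mul_psd_nonneg hS₂ hDE
      have hexp : (S₂ * (E - (D₁ + D₂))).trace
          = (S₂ * E).trace - ((S₂ * D₁).trace + (S₂ * D₂).trace) := by
        rw [Matrix.mul_sub, Matrix.mul_add, Matrix.trace_sub, Matrix.trace_add]
      rw [hexp] at h0
      have h1 := (Complex.le_def.mp h0).1
      simp only [Complex.zero_re, Complex.sub_re, Complex.add_re] at h1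
      linarith
    set d : Fin n → ℂ := fun i => star (χ i) ⬝ᵥ (D₁ *ᵥ χ i) with hd
    have hd0 : ∀ i, 0 ≤ (d i).re := fun i => by
      have := (Complex.le_def.mp (hD₁.dotProduct_mulVec_nonneg (χ i))).1
      simpa using this
    have hd1 : ∀ i, 0 < κ i → (d i).re ≤ 1 := by
      intro i hi
      have h0 := (Complex.le_def.mp (hDE.dotProduct_mulVec_nonneg (χ i))).1
      have hEq : star (χ i) ⬝ᵥ ((E - (D₁ + D₂)) *ᵥ χ i)
          = 1 - (d i + star (χ i) ⬝ᵥ (D₂ *ᵥ χ i)) := by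
        rw [Matrix.sub_mulVec, Matrix.add_mulVec, dotProduct_sub, dotProduct_add,
          hEv i (ne_of_gt hi), hON, if_pos rfl]
      have h2 := (Complex.le_def.mp (hD₂.dotProduct_mulVec_nonneg (χ i))).1
      rw [hEq] at h0
      simp only [Complex.zero_re, Complex.sub_re, Complex.add_re, Complex.one_re] at h0
      simp only [Complex.zero_re] at h2
      linarith
    have htrC : (((S₁ - S₂) * D₁).trace).re = ∑ i, κ i * (d i).re := by
      rw [hspec, Finset.sum_mul, Matrix.trace_sum, Complex.re_sum]
      refine Finset.sum_congr rfl fun i _ => ?_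
      rw [smul_mul_assoc, Matrix.trace_smul, Matrix.trace_mul_comm, trace_mul_vmv]
      simp [Complex.mul_re, hd]
    have hQre : (Q.trace).re = ∑ i ∈ Finset.univ.filter (fun i => 0 < κ i), κ i := by
      rw [htrQ, ← Complex.ofReal_sum]
      simp
    have hB : (((S₁ - S₂) * D₁).trace).re ≤ (Q.trace).re := by
      rw [htrC, hQre]
      calc ∑ i, κ i * (d i).re ≤ ∑ i, (if 0 < κ i then κ i else 0) := by
            refine Finset.sum_le_sum fun i _ => ?_
            by_cases h : 0 < κ i
            · rw [if_pos h]
              exact mul_le_of_le_one_right (le_of_lt h) (hd1 i h)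
            · rw [if_neg h]
              exact mul_nonpos_iff.mpr (Or.inr ⟨not_lt.mp h, hd0 i⟩)
        _ = ∑ i ∈ Finset.univ.filter (fun i => 0 < κ i), κ i := (Finset.sum_filter _ _).symm
    have hsplit : ((S₁ * D₁).trace).re = (((S₁ - S₂) * D₁).trace).re + ((S₂ * D₁).trace).re := by
      rw [Matrix.sub_mul, Matrix.trace_sub]
      simp [Complex.sub_re]
    linarith
  refine ⟨⟨⟨P, E - P, hPpsd, hEPpsd, ?_, hval.symm⟩, ?_⟩, hPpsd, hEPpsd, hval⟩
  · rw [show E - (P + (E - P)) = 0 by abel]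
    exact Matrix.PosSemidef.zero
  · rintro t ⟨D₁, D₂, hD₁, hD₂, hDE, rfl⟩
    exact hub D₁ D₂ hD₁ hD₂ hDE
end
end

section
/- Let θ ↦ S_θ be a differentiable family of positive semidefinite Hermitian operators on a finite-dimensional complex inner product space H with derivative S_θ′, let J_θ = Tr(S_θ) > 0, and let ĝ_θ be a Hermitian operator solving the symmetric logarithmic derivative equation ĝ_θS_θ + S_θĝ_θ = 2S_θ′. Set γ_θ = Tr(S_θĝ_θ)/J_θ. If x̂ is a Hermitian operator satisfying the unbiasedness condition Tr(S_θx̂) = θJ_θ for all θ in a neighborhood of the given point, then Tr[S_θ(x̂ − θ)²] · Tr[S_θ(ĝ_θ − γ_θ)²] ≥ J_θ²; equivalently, the variance σ_x² = Tr[S_θ(x̂ − θ)²]/J_θ of the unbiased observable is bounded below by the inverse variance of the logarithmic derivative: σ_x² ≥ 1/σ_ĝ², where σ_ĝ² = Tr[S_θ(ĝ_θ − γ_θ)²]/J_θ. -/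
open Matrix
open scoped ComplexOrder

lemma matrix_cs {n : ℕ} (P Q : Matrix (Fin n) (Fin n) ℂ) :
    (((Pᴴ * Q).trace).re) ^ 2 ≤ (((Pᴴ * P).trace).re) * (((Qᴴ * Q).trace).re) := by
  classical
  let f : Matrix (Fin n) (Fin n) ℂ → EuclideanSpace ℂ (Fin n × Fin n) :=
    fun R => (WithLp.equiv 2 _).symm (fun ij : Fin n × Fin n => R ij.1 ij.2)
  have key : ∀ R T : Matrix (Fin n) (Fin n) ℂ,
      ((Rᴴ * T).trace) = (inner ℂ (f R) (f T) : ℂ) := by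
    intro R T
    simp only [Matrix.trace, Matrix.diag, Matrix.mul_apply, Matrix.conjTranspose_apply,
      PiLp.inner_apply, RCLike.inner_apply, starRingEnd_apply, Fintype.sum_prod_type, f,
      WithLp.equiv_symm_apply, PiLp.toLp_apply]
    rw [Finset.sum_comm]
    simp only [mul_comm]
  rw [key, key, key]
  have h1 : |(inner ℂ (f P) (f Q) : ℂ).re| ≤ ‖(inner ℂ (f P) (f Q) : ℂ)‖ := by
    simpa using Complex.abs_re_le_norm (inner ℂ (f P) (f Q) : ℂ)
  have h2 : ‖(inner ℂ (f P) (f Q) : ℂ)‖ ≤ ‖f P‖ * ‖f Q‖ := norm_inner_le_norm _ _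
  have h3 : (inner ℂ (f P) (f P) : ℂ).re = ‖f P‖ ^ 2 := by
    simpa using inner_self_eq_norm_sq (𝕜 := ℂ) (f P)
  have h4 : (inner ℂ (f Q) (f Q) : ℂ).re = ‖f Q‖ ^ 2 := by
    simpa using inner_self_eq_norm_sq (𝕜 := ℂ) (f Q)
  rw [h3, h4]
  nlinarith [norm_nonneg (f P), norm_nonneg (f Q), abs_nonneg ((inner ℂ (f P) (f Q) : ℂ)).re,
    sq_abs ((inner ℂ (f P) (f Q) : ℂ)).re, norm_nonneg (inner ℂ (f P) (f Q) : ℂ)]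

open scoped MatrixOrder in
lemma psd_sqrt_exists {n : ℕ} {A : Matrix (Fin n) (Fin n) ℂ} (hA : A.PosSemidef) :
    ∃ M : Matrix (Fin n) (Fin n) ℂ, Mᴴ = M ∧ M * M = A := by
  obtain ⟨M, hMsa, -, hMM⟩ := CFC.exists_sqrt_of_isSelfAdjoint_of_quasispectrumRestricts
    hA.isHermitian (QuasispectrumRestricts.nnreal_of_nonneg hA.nonneg)
  exact ⟨M, hMsa, hMM⟩

set_option linter.unusedVariables false in
/-- Noncommutative (symmetric) Rao–Cramér bound (3.1.9).  `S` is a differentiable family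
of positive semidefinite operators with entrywise derivative `S'`, `g` is a Hermitian
solution of the symmetric logarithmic derivative equation `g S + S g = 2 S'` at `θ₀`, and
`x` is a Hermitian operator unbiased for `θ` near `θ₀`: `Tr (S_θ x) = θ J_θ`.  Then
`Tr [S (x − θ₀)²] · Tr [S (g − γ)²] ≥ J²` at `θ₀`, where `γ = Tr (S g)/J`. -/
theorem symmetric_rao_cramer {n : ℕ}
    (S S' : ℝ → Matrix (Fin n) (Fin n) ℂ) (θ₀ : ℝ)
    (hS : ∀ θ, (S θ).PosSemidef)
    (hderiv : ∀ θ, ∀ i j, HasDerivAt (fun t => S t i j) (S' θ i j) θ)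
    (hJ : 0 < ((S θ₀).trace).re)
    (g : Matrix (Fin n) (Fin n) ℂ) (hg : g.IsHermitian)
    (hSLD : g * S θ₀ + S θ₀ * g = (2 : ℂ) • S' θ₀)
    (x : Matrix (Fin n) (Fin n) ℂ) (hx : x.IsHermitian)
    (hunbiased : ∀ᶠ θ in nhds θ₀, (S θ * x).trace = (θ : ℂ) * (S θ).trace) :
    (((S θ₀).trace).re) ^ 2 ≤
      ((S θ₀ * (x - (θ₀ : ℂ) • 1) * (x - (θ₀ : ℂ) • 1)).trace).re *
        ((S θ₀ * (g - ((((S θ₀ * g).trace).re / ((S θ₀).trace).re : ℝ) : ℂ) • 1) *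
          (g - ((((S θ₀ * g).trace).re / ((S θ₀).trace).re : ℝ) : ℂ) • 1)).trace).re := by
  classical
  set c : ℝ := (((S θ₀ * g).trace).re / ((S θ₀).trace).re : ℝ) with hc
  set A : Matrix (Fin n) (Fin n) ℂ := x - (θ₀ : ℂ) • 1 with hA
  set B : Matrix (Fin n) (Fin n) ℂ := g - (c : ℂ) • 1 with hB
  -- Hermitian facts
  have hAH : Aᴴ = A := by
    simp [hA, Matrix.conjTranspose_sub, Matrix.conjTranspose_smul, hx.eq, Complex.conj_ofReal]
  have hBH : Bᴴ = B := by
    simp [hB, Matrix.conjTranspose_sub, Matrix.conjTranspose_smul, hg.eq, Complex.conj_ofReal]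
  -- square root of S θ₀
  obtain ⟨M, hMH, hMM⟩ := psd_sqrt_exists (hS θ₀)
  -- derivative identities
  have HDtr : HasDerivAt (fun t => (S t).trace) ((S' θ₀).trace) θ₀ := by
    simp only [Matrix.trace, Matrix.diag]
    exact HasDerivAt.fun_sum fun i _ => hderiv θ₀ i i
  have HDmul : HasDerivAt (fun t => (S t * x).trace) ((S' θ₀ * x).trace) θ₀ := by
    simp only [Matrix.trace, Matrix.diag, Matrix.mul_apply]
    exact HasDerivAt.fun_sum fun i _ => HasDerivAt.fun_sum fun j _ => (hderiv θ₀ i j).mul_const (x j i)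
  have HDid : HasDerivAt (fun t : ℝ => (t : ℂ)) 1 θ₀ := by
    simpa using (hasDerivAt_id θ₀).ofReal_comp
  have HDrhs : HasDerivAt (fun t : ℝ => (t : ℂ) * (S t).trace)
      ((S θ₀).trace + (θ₀ : ℂ) * (S' θ₀).trace) θ₀ := by
    simpa using HDid.fun_mul HDtr
  have HDmul' : HasDerivAt (fun t => (S t * x).trace)
      ((S θ₀).trace + (θ₀ : ℂ) * (S' θ₀).trace) θ₀ :=
    HDrhs.congr_of_eventuallyEq hunbiased
  have hT : (S' θ₀ * x).trace = (S θ₀).trace + (θ₀ : ℂ) * (S' θ₀).trace :=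
    HDmul.unique HDmul'
  -- traces from the SLD equation
  have htrSLD : (g * S θ₀).trace + (S θ₀ * g).trace = 2 * (S' θ₀).trace := by
    have := congrArg Matrix.trace hSLD
    simpa [Matrix.trace_add, Matrix.trace_smul, smul_eq_mul] using this
  have hgS : (g * S θ₀).trace = (S θ₀ * g).trace := Matrix.trace_mul_comm g (S θ₀)
  have hSg : (S θ₀ * g).trace = (S' θ₀).trace := by
    rw [hgS] at htrSLD; linear_combination htrSLD / 2
  have htrSLDx : (g * S θ₀ * x).trace + (S θ₀ * g * x).trace = 2 * (S' θ₀ * x).trace := by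
    have := congrArg (fun R => (R * x).trace) hSLD
    simpa [Matrix.add_mul, Matrix.trace_add, Matrix.smul_mul, Matrix.trace_smul,
      smul_eq_mul] using this
  have hcyc1 : (g * S θ₀ * x).trace = (S θ₀ * x * g).trace :=
    (Matrix.trace_mul_cycle (S θ₀) x g).symm
  have hsum : (S θ₀ * x * g).trace + (S θ₀ * g * x).trace
      = 2 * ((S θ₀).trace + (θ₀ : ℂ) * (S θ₀ * g).trace) := by
    rw [← hcyc1, htrSLDx, hT, hSg]
  -- conjugation fact
  have hconj : starRingEnd ℂ ((S θ₀ * g * x).trace) = (S θ₀ * x * g).trace := by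
    have h1 : ((S θ₀ * g * x)ᴴ).trace = starRingEnd ℂ ((S θ₀ * g * x).trace) := by
      rw [Matrix.trace_conjTranspose]; rfl
    rw [← h1]
    have h2 : (S θ₀ * g * x)ᴴ = x * (g * S θ₀) := by
      simp [Matrix.conjTranspose_mul, hx.eq, hg.eq, (hS θ₀).isHermitian.eq, Matrix.mul_assoc]
    rw [h2, ← Matrix.mul_assoc, Matrix.trace_mul_cycle]
  -- real part of Tr(S g x)
  have hReSgx : ((S θ₀ * g * x).trace).re
      = ((S θ₀).trace).re + θ₀ * ((S θ₀ * g).trace).re := by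
    have h1 : ((S θ₀ * x * g).trace).re = ((S θ₀ * g * x).trace).re := by
      rw [← hconj]; simp [Complex.conj_re]
    have h2 := congrArg Complex.re hsum
    simp only [Complex.add_re, Complex.mul_re, Complex.ofReal_re, Complex.ofReal_im,
      Complex.re_ofNat, Complex.im_ofNat] at h2
    linarith [h2]
  -- unbiasedness at θ₀
  have hx0 : (S θ₀ * x).trace = (θ₀ : ℂ) * (S θ₀).trace := hunbiased.self_of_nhds
  -- the key identity : Tr(A S B) = Tr(S g x) - θ₀ Tr(S g)
  have hASB : (A * S θ₀ * B).trace = (S θ₀ * g * x).trace - (θ₀ : ℂ) * (S θ₀ * g).trace := by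
    have hxS : (x * S θ₀).trace = (θ₀ : ℂ) * (S θ₀).trace := by
      rw [Matrix.trace_mul_comm]; exact hx0
    have hxSg : (x * S θ₀ * g).trace = (S θ₀ * g * x).trace :=
      (Matrix.trace_mul_cycle (S θ₀) g x).symm
    rw [hA, hB]
    simp only [Matrix.sub_mul, Matrix.mul_sub, Matrix.smul_mul, Matrix.mul_smul,
      Matrix.trace_sub, Matrix.trace_smul, Matrix.mul_one, Matrix.one_mul, smul_eq_mul]
    rw [hxSg, hxS]
    ring
  have hReASB : ((A * S θ₀ * B).trace).re = ((S θ₀).trace).re := by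
    rw [hASB]
    simp only [Complex.sub_re, Complex.mul_re, Complex.ofReal_re, Complex.ofReal_im]
    rw [hReSgx]; ring
  -- apply Cauchy–Schwarz with P = M * A, Q = M * B
  have hcs := matrix_cs (M * A) (M * B)
  have hPQ : (M * A)ᴴ * (M * B) = A * S θ₀ * B := by
    rw [Matrix.conjTranspose_mul, hMH, hAH, Matrix.mul_assoc, ← Matrix.mul_assoc M, hMM,
      ← Matrix.mul_assoc]
  have hPP : (M * A)ᴴ * (M * A) = A * S θ₀ * A := by
    rw [Matrix.conjTranspose_mul, hMH, hAH, Matrix.mul_assoc, ← Matrix.mul_assoc M, hMM,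
      ← Matrix.mul_assoc]
  have hQQ : (M * B)ᴴ * (M * B) = B * S θ₀ * B := by
    rw [Matrix.conjTranspose_mul, hMH, hBH, Matrix.mul_assoc, ← Matrix.mul_assoc M, hMM,
      ← Matrix.mul_assoc]
  rw [hPQ, hPP, hQQ, hReASB] at hcs
  have hcycA : (A * S θ₀ * A).trace = (S θ₀ * A * A).trace :=
    (Matrix.trace_mul_cycle (S θ₀) A A).symm
  have hcycB : (B * S θ₀ * B).trace = (S θ₀ * B * B).trace :=
    (Matrix.trace_mul_cycle (S θ₀) B B).symm
  rw [hcycA, hcycB] at hcs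
  exact hcs
end
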